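/- arXiv:2003.13338 — 2 statements merged into one kernel-verified Lean document; each statement's English description precedes it below -/
import Mathlib

section
/- Let N = (V, A, c) be a network, let y, z ∈ V be distinct vertices, and let x ∈ V be any vertex. Then λ^N_{yz}(x) = φ^N_{yz}(x), i.e. the minimum, over all maximum-length sequences of arc-disjoint paths from y to z in N, of the number of paths in the sequence passing through x equals the difference φ^N_{yz} − φ^{N_x}_{yz} between the maximum flow value from y to z in N and the maximum flow value from y to z in the network N_x obtained from N by setting to zero the capacity of every arc incident to x. -/
/-!
Networks on the complete digraph: capacities `c : V → V → ℕ` with no loops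
(arcs are ordered pairs of distinct vertices; loops are given capacity 0).
-/

structure Network (V : Type*) where
  c : V → V → ℕ
  no_loop : ∀ v, c v v = 0

namespace NetFlow

variable {V : Type*} [Fintype V] [DecidableEq V]

/-- `f` is a flow from `y` to `z` in `N`. -/
def IsFlow (N : Network V) (y z : V) (f : V → V → ℕ) : Prop :=
  (∀ u v, f u v ≤ N.c u v) ∧
  (∀ x, x ≠ y → x ≠ z → ∑ u, f u x = ∑ u, f x u)

/-- The value of a flow from `y`. -/
def flowValue (f : V → V → ℕ) (y : V) : ℤ :=
  (∑ u, (f y u : ℤ)) - ∑ u, (f u y : ℤ)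

/-- The maximum flow value `φ^N_{yz}`. -/
noncomputable def maxFlowValue (N : Network V) (y z : V) : ℕ :=
  sSup {m : ℕ | ∃ f, IsFlow N y z f ∧ flowValue f y = (m : ℤ)}

/-- `f` is a maximum flow from `y` to `z` in `N`. -/
def IsMaxFlow (N : Network V) (y z : V) (f : V → V → ℕ) : Prop :=
  IsFlow N y z f ∧ flowValue f y = (maxFlowValue N y z : ℤ)

/-- The network `N_X`: capacities of arcs incident to `X` are set to zero. -/
def removeVerts (N : Network V) (X : Finset V) : Network V where
  c u v := if u ∈ X ∨ v ∈ X then 0 else N.c u v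
  no_loop v := by simp [N.no_loop v]

/-- `φ^N_{yz}(X) = φ^N_{yz} - φ^{N_X}_{yz}`. -/
noncomputable def phiDrop (N : Network V) (y z : V) (X : Finset V) : ℤ :=
  (maxFlowValue N y z : ℤ) - (maxFlowValue (removeVerts N X) y z : ℤ)

/-- The (consecutive) arcs of a list of vertices. -/
def pathArcs (p : List V) : List (V × V) := p.zip p.tail

/-- `p` is a path from `y` to `z` in `N`: at least two distinct vertices, starting at `y`,
ending at `z`, with all consecutive arcs of positive capacity. -/
def IsPath (N : Network V) (y z : V) (p : List V) : Prop :=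
  2 ≤ p.length ∧ p.Nodup ∧ p.head? = some y ∧ p.getLast? = some z ∧
    p.Chain' fun u v => 1 ≤ N.c u v

/-- `p` is a cycle in `N`. -/
def IsCycle (N : Network V) (p : List V) : Prop :=
  3 ≤ p.length ∧ p.dropLast.Nodup ∧ p.head? = p.getLast? ∧
    p.Chain' fun u v => 1 ≤ N.c u v

/-- A sequence of arc-disjoint paths from `y` to `z` in `N`: each component is a path, and
each arc `a` is used by at most `c a` components. -/
def IsPathSeq (N : Network V) (y z : V) (γ : List (List V)) : Prop :=
  (∀ p ∈ γ, IsPath N y z p) ∧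
  ∀ u v : V, γ.countP (fun p => decide ((u, v) ∈ pathArcs p)) ≤ N.c u v

/-- `λ^N_{yz}`: the maximum length of a sequence of arc-disjoint paths from `y` to `z`. -/
noncomputable def maxSeqLen (N : Network V) (y z : V) : ℕ :=
  sSup {m : ℕ | ∃ γ : List (List V), IsPathSeq N y z γ ∧ γ.length = m}

/-- `M^N_{yz}`: the sequences of arc-disjoint paths from `y` to `z` of maximum length. -/
def MaxSeqs (N : Network V) (y z : V) : Set (List (List V)) :=
  {γ | IsPathSeq N y z γ ∧ γ.length = maxSeqLen N y z}

/-- `l_X(γ)`: the number of components of `γ` having a vertex in `X`. -/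
def lX (X : Finset V) (γ : List (List V)) : ℕ :=
  γ.countP fun p => p.any fun x => decide (x ∈ X)

/-- `λ^N_{yz}(X)`: the minimum of `l_X` over maximum-length sequences of arc-disjoint paths. -/
noncomputable def lambdaX (N : Network V) (y z : V) (X : Finset V) : ℕ :=
  sInf {n : ℕ | ∃ γ ∈ MaxSeqs N y z, lX X γ = n}

/-- The flow through a vertex: `f(x) = Σ_{a exiting x} f(a)` if `x ∉ {y,z}`, `v(f)` otherwise. -/
def vertexFlow (f : V → V → ℕ) (y z x : V) : ℤ :=
  if x = y ∨ x = z then flowValue f y else ∑ u, (f x u : ℤ)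

/-- `δ^N_{yz}(X)`: the minimum of `f(X) = Σ_{x∈X} f(x)` over maximum flows `f`. -/
noncomputable def deltaX (N : Network V) (y z : V) (X : Finset V) : ℕ :=
  sInf {n : ℕ | ∃ f, IsMaxFlow N y z f ∧ (∑ x ∈ X, vertexFlow f y z x) = (n : ℤ)}

/-- The flow `f_γ` associated with a sequence of arc-disjoint paths. -/
def seqFlow (γ : List (List V)) (u v : V) : ℕ :=
  γ.countP fun p => decide ((u, v) ∈ pathArcs p)

/-- The path (or cycle) function `χ_p` of a path or cycle `p`. -/
def chi (p : List V) (u v : V) : ℕ := (pathArcs p).count (u, v)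

/-- `(γ, w)` is a decomposition of the flow `f`: `γ` is a sequence of `v(f)` paths from `y`
to `z`, `w` a sequence of cycles, and `f = Σ_j χ_{γ_j} + Σ_j χ_{w_j}`. -/
def IsDecomposition (N : Network V) (y z : V) (f : V → V → ℕ)
    (γ w : List (List V)) : Prop :=
  (∀ p ∈ γ, IsPath N y z p) ∧ (∀ q ∈ w, IsCycle N q) ∧
  (γ.length : ℤ) = flowValue f y ∧
  ∀ u v : V, f u v = (γ.map fun p => chi p u v).sum + (w.map fun q => chi q u v).sum

/-- The forward arcs of a generalized path given by vertices `p` and directions `d`. -/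
def forwardArcs (p : List V) (d : List Bool) : List (V × V) :=
  ((p.zip p.tail).zip d).filterMap fun e => if e.2 then some e.1 else none

/-- The backward arcs of a generalized path given by vertices `p` and directions `d`. -/
def backwardArcs (p : List V) (d : List Bool) : List (V × V) :=
  ((p.zip p.tail).zip d).filterMap fun e => if e.2 then none else some (e.1.2, e.1.1)

/-- `(p, d)` is a generalized path from `y` to `z`: distinct vertices `x_1 = y, …, x_m = z`
(`m ≥ 2`), the `i`-th arc being `(x_i, x_{i+1})` (forward, `d_i = true`) or `(x_{i+1}, x_i)`
(backward, `d_i = false`). -/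
def IsGenPath (y z : V) (p : List V) (d : List Bool) : Prop :=
  2 ≤ p.length ∧ p.Nodup ∧ p.head? = some y ∧ p.getLast? = some z ∧
    d.length + 1 = p.length

/-- `(p, d)` is an augmenting path for `f` from `y` to `z` in `N`. -/
def IsAugPath (N : Network V) (y z : V) (f : V → V → ℕ)
    (p : List V) (d : List Bool) : Prop :=
  IsGenPath y z p d ∧
  (∀ a ∈ forwardArcs p d, f a.1 a.2 < N.c a.1 a.2) ∧
  (∀ a ∈ backwardArcs p d, 1 ≤ f a.1 a.2)

/-- `χ_σ` for a generalized path `σ = (p, d)`: `+1` on forward arcs, `-1` on backward arcs. -/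
def chiGen (p : List V) (d : List Bool) (u v : V) : ℤ :=
  ((forwardArcs p d).count (u, v) : ℤ) - ((backwardArcs p d).count (u, v) : ℤ)

/-- The full flow vitality group centrality measure `φ^N(X)`. -/
noncomputable def phiGC (N : Network V) (X : Finset V) : ℝ :=
  ∑ a ∈ Finset.univ.filter (fun a : V × V => a.1 ≠ a.2 ∧ 0 < maxFlowValue N a.1 a.2),
    (phiDrop N a.1 a.2 X : ℝ) / (maxFlowValue N a.1 a.2 : ℝ)

/-- The full flow betweenness group centrality measure `λ^N(X)`. -/
noncomputable def lambdaGC (N : Network V) (X : Finset V) : ℝ :=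
  ∑ a ∈ Finset.univ.filter (fun a : V × V => a.1 ≠ a.2 ∧ 0 < maxFlowValue N a.1 a.2),
    (lambdaX N a.1 a.2 X : ℝ) / (maxFlowValue N a.1 a.2 : ℝ)

end NetFlow
namespace NetFlow

variable {V : Type*} [Fintype V] [DecidableEq V]

open List

set_option linter.unusedSectionVars false

/-! ### Basic counting lemmas -/

lemma indicator_pair_fst (a : V × V) (v : V) :
    (∑ u, if a = (v, u) then 1 else 0) = if a.1 = v then 1 else 0 := by
  rcases eq_or_ne a.1 v with h | h
  · rw [Finset.sum_eq_single a.2]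
    · simp [← h]
    · intro b _ hb; simp only [ite_eq_right_iff]; intro hh; rw [hh] at hb; simp at hb
    · simp
  · rw [if_neg h]
    apply Finset.sum_eq_zero
    intro b _
    simp only [ite_eq_right_iff]
    intro hh; rw [hh] at h; simp at h

lemma indicator_pair_snd (a : V × V) (v : V) :
    (∑ u, if a = (u, v) then 1 else 0) = if a.2 = v then 1 else 0 := by
  rcases eq_or_ne a.2 v with h | h
  · rw [Finset.sum_eq_single a.1]
    · simp [← h]
    · intro b _ hb; simp only [ite_eq_right_iff]; intro hh; rw [hh] at hb; simp at hb
    · simp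
  · rw [if_neg h]
    apply Finset.sum_eq_zero
    intro b _
    simp only [ite_eq_right_iff]
    intro hh; rw [hh] at h; simp at h

lemma sum_count_fst (l : List (V × V)) (v : V) :
    ∑ u, l.count (v, u) = l.countP (fun a => decide (a.1 = v)) := by
  induction l with
  | nil => simp
  | cons a t ih =>
    simp only [List.count_cons, List.countP_cons, beq_iff_eq, decide_eq_true_eq]
    rw [Finset.sum_add_distrib, ih, indicator_pair_fst]

lemma sum_count_snd (l : List (V × V)) (v : V) :
    ∑ u, l.count (u, v) = l.countP (fun a => decide (a.2 = v)) := by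
  induction l with
  | nil => simp
  | cons a t ih =>
    simp only [List.count_cons, List.countP_cons, beq_iff_eq, decide_eq_true_eq]
    rw [Finset.sum_add_distrib, ih, indicator_pair_snd]

lemma sum_sum_count (l : List (V × V)) :
    ∑ u, ∑ v, l.count (u, v) = l.length := by
  induction l with
  | nil => simp
  | cons a t ih =>
    simp only [List.count_cons, List.length_cons, beq_iff_eq]
    have e1 : ∑ u, ∑ v, (t.count (u, v) + if a = (u, v) then 1 else 0)
        = (∑ u, ∑ v, t.count (u, v)) + ∑ u, ∑ v, (if a = (u, v) then 1 else 0) := by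
      simp [Finset.sum_add_distrib, eq_comm]
    rw [e1, ih]
    congr 1
    have e2 : ∀ u : V, (∑ v, if a = (u, v) then 1 else 0) = if a.1 = u then 1 else 0 := by
      intro u
      rcases eq_or_ne a.1 u with h | h
      · rw [Finset.sum_eq_single a.2]
        · simp [← h]
        · intro b _ hb; simp only [ite_eq_right_iff]; intro hh; rw [hh] at hb; simp at hb
        · simp
      · rw [if_neg h]; apply Finset.sum_eq_zero; intro b _
        simp only [ite_eq_right_iff]; intro hh; rw [hh] at h; simp at h
    rw [Finset.sum_congr rfl (fun u _ => e2 u)]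
    simp

lemma pathArcs_cons₂ (a b : V) (t : List V) :
    pathArcs (a :: b :: t) = (a, b) :: pathArcs (b :: t) := rfl

lemma countP_fst_pathArcs (p : List V) (v : V) :
    (pathArcs p).countP (fun a => decide (a.1 = v)) = p.dropLast.count v := by
  induction p with
  | nil => simp [pathArcs]
  | cons a t ih =>
    cases t with
    | nil => simp [pathArcs]
    | cons b t' =>
      rw [pathArcs_cons₂, List.countP_cons, ih]
      simp only [List.dropLast_cons₂, List.count_cons, beq_iff_eq, decide_eq_true_eq]

lemma countP_snd_pathArcs (p : List V) (v : V) :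
    (pathArcs p).countP (fun a => decide (a.2 = v)) = p.tail.count v := by
  induction p with
  | nil => simp [pathArcs]
  | cons a t ih =>
    cases t with
    | nil => simp [pathArcs]
    | cons b t' =>
      rw [pathArcs_cons₂, List.countP_cons, ih]
      simp only [List.tail_cons, List.count_cons, beq_iff_eq, decide_eq_true_eq]

lemma mem_of_mem_pathArcs {p : List V} {u v : V} (h : (u, v) ∈ pathArcs p) :
    u ∈ p ∧ v ∈ p := by
  unfold pathArcs at h
  have h1 := List.of_mem_zip h
  exact ⟨h1.1, List.mem_of_mem_tail h1.2⟩

lemma pathArcs_map_fst (p : List V) : (pathArcs p).map Prod.fst = p.dropLast := by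
  induction p with
  | nil => rfl
  | cons a t ih =>
    cases t with
    | nil => rfl
    | cons b t' =>
      rw [pathArcs_cons₂, List.map_cons, ih, List.dropLast_cons₂]

lemma pathArcs_nodup {p : List V} (hp : p.Nodup) : (pathArcs p).Nodup := by
  have h1 : (p.dropLast).Nodup := hp.sublist (List.dropLast_sublist p)
  rw [← pathArcs_map_fst] at h1
  exact h1.of_map _

lemma rel_of_mem_pathArcs {R : V → V → Prop} {p : List V} {u v : V}
    (hc : p.Chain' R) (h : (u, v) ∈ pathArcs p) : R u v := by
  induction p with
  | nil => simp [pathArcs] at h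
  | cons a t ih =>
    cases t with
    | nil => simp [pathArcs] at h
    | cons b t' =>
      rw [pathArcs_cons₂, List.mem_cons] at h
      rcases h with h | h
      · rw [Prod.mk.injEq] at h
        rw [h.1, h.2]
        exact (List.isChain_cons_cons.mp hc).1
      · exact ih (List.isChain_cons_cons.mp hc).2 h

end NetFlow
namespace NetFlow

variable {V : Type*} [Fintype V] [DecidableEq V]

set_option linter.unusedSectionVars false

/-! ### Counting in paths -/

lemma count_eq_tail_count {p : List V} {y : V} (hp : p.head? = some y) (v : V) :
    p.count v = p.tail.count v + (if v = y then 1 else 0) := by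
  cases p with
  | nil => simp at hp
  | cons a t =>
    simp only [List.head?_cons, Option.some.injEq] at hp
    subst hp
    simp only [List.count_cons, List.tail_cons, beq_iff_eq]
    congr 1
    simp [eq_comm]

lemma count_eq_dropLast_count {p : List V} {z : V} (hp : p.getLast? = some z) (v : V) :
    p.count v = p.dropLast.count v + (if v = z then 1 else 0) := by
  have hne : p ≠ [] := by rintro rfl; simp at hp
  have h1 : p = p.dropLast ++ [p.getLast hne] := (List.dropLast_append_getLast hne).symm
  have h2 : p.getLast hne = z := by
    rw [List.getLast?_eq_getLast hne] at hp
    exact Option.some.injEq .. ▸ hp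
  conv_lhs => rw [h1]
  rw [List.count_append, h2]
  simp [List.count_singleton', eq_comm]

lemma sum_chi_out (p : List V) (v : V) :
    ∑ u, chi p v u = p.dropLast.count v := by
  unfold chi
  rw [sum_count_fst, countP_fst_pathArcs]

lemma sum_chi_in (p : List V) (v : V) :
    ∑ u, chi p u v = p.tail.count v := by
  unfold chi
  rw [sum_count_snd, countP_snd_pathArcs]

/-! ### Flow basics -/

lemma isFlow_zero (N : Network V) (y z : V) : IsFlow N y z (fun _ _ => 0) :=
  ⟨fun _ _ => Nat.zero_le _, fun _ _ _ => rfl⟩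

lemma flowValue_zero (y : V) : flowValue (fun (_ _ : V) => 0) y = 0 := by
  simp [flowValue]

lemma net_sum_split (f : V → V → ℕ) (S : Finset V) (x : V) :
    (∑ u, (f x u : ℤ)) - ∑ u, (f u x : ℤ)
      = (∑ u ∈ S, ((f x u : ℤ) - f u x)) + ∑ u ∈ Sᶜ, ((f x u : ℤ) - f u x) := by
  rw [Finset.sum_add_sum_compl]
  rw [Finset.sum_sub_distrib]

lemma flowValue_cut {N : Network V} {y z : V} {f : V → V → ℕ} (hf : IsFlow N y z f)
    (S : Finset V) (hy : y ∈ S) (hz : z ∉ S) :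
    flowValue f y = ∑ u ∈ S, ∑ v ∈ Sᶜ, ((f u v : ℤ) - f v u) := by
  have hcons : ∀ x ∈ S, x ≠ y → ((∑ u, (f x u : ℤ)) - ∑ u, (f u x : ℤ)) = 0 := by
    intro x hx hxy
    have hxz : x ≠ z := fun h => hz (h ▸ hx)
    have h := hf.2 x hxy hxz
    have h' : ((∑ u, f u x : ℕ) : ℤ) = ((∑ u, f x u : ℕ) : ℤ) := by rw [h]
    push_cast at h'
    omega
  have h1 : flowValue f y = ∑ x ∈ S, ((∑ u, (f x u : ℤ)) - ∑ u, (f u x : ℤ)) := by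
    rw [Finset.sum_eq_single_of_mem y hy]
    · rfl
    · intro x hx hxy; exact hcons x hx hxy
  rw [h1]
  have h2 : ∀ x ∈ S, ((∑ u, (f x u : ℤ)) - ∑ u, (f u x : ℤ))
      = (∑ u ∈ S, ((f x u : ℤ) - f u x)) + ∑ u ∈ Sᶜ, ((f x u : ℤ) - f u x) :=
    fun x _ => net_sum_split f S x
  rw [Finset.sum_congr rfl h2, Finset.sum_add_distrib]
  have h3 : ∑ x ∈ S, ∑ u ∈ S, ((f x u : ℤ) - f u x) = 0 := by
    have := Finset.sum_comm (s := S) (t := S) (f := fun x u => ((f x u : ℤ) - f u x))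
    have h4 : ∑ x ∈ S, ∑ u ∈ S, ((f x u : ℤ) - f u x)
        = - ∑ x ∈ S, ∑ u ∈ S, ((f x u : ℤ) - f u x) := by
      conv_lhs => rw [this]
      rw [← Finset.sum_neg_distrib]
      congr 1; ext u
      rw [← Finset.sum_neg_distrib]
      congr 1; ext x
      ring
    linarith
  rw [h3, zero_add]

lemma flowValue_le {N : Network V} {y z : V} {f : V → V → ℕ} (hf : IsFlow N y z f) :
    flowValue f y ≤ ∑ u, (N.c y u : ℤ) := by
  unfold flowValue
  have h1 : ∑ u, (f y u : ℤ) ≤ ∑ u, (N.c y u : ℤ) :=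
    Finset.sum_le_sum fun u _ => by exact_mod_cast hf.1 y u
  have h2 : (0 : ℤ) ≤ ∑ u, (f u y : ℤ) :=
    Finset.sum_nonneg fun u _ => by positivity
  omega

lemma flowSet_bddAbove (N : Network V) (y z : V) :
    BddAbove {m : ℕ | ∃ f, IsFlow N y z f ∧ flowValue f y = (m : ℤ)} := by
  refine ⟨∑ u, N.c y u, ?_⟩
  rintro m ⟨f, hf, hv⟩
  have := flowValue_le hf
  rw [hv] at this
  have h2 : ((∑ u, N.c y u : ℕ) : ℤ) = ∑ u, (N.c y u : ℤ) := by push_cast; rfl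
  rw [← h2] at this
  exact_mod_cast this

lemma flowSet_nonempty (N : Network V) (y z : V) :
    (0 : ℕ) ∈ {m : ℕ | ∃ f, IsFlow N y z f ∧ flowValue f y = (m : ℤ)} :=
  ⟨fun _ _ => 0, isFlow_zero N y z, by simp [flowValue_zero]⟩

lemma exists_isMaxFlow (N : Network V) (y z : V) : ∃ f, IsMaxFlow N y z f := by
  have h := Nat.sSup_mem ⟨0, flowSet_nonempty N y z⟩ (flowSet_bddAbove N y z)
  obtain ⟨f, hf, hv⟩ := h
  exact ⟨f, hf, hv⟩

lemma le_maxFlowValue {N : Network V} {y z : V} {f : V → V → ℕ} {m : ℕ}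
    (hf : IsFlow N y z f) (hv : flowValue f y = (m : ℤ)) : m ≤ maxFlowValue N y z :=
  le_csSup (flowSet_bddAbove N y z) ⟨f, hf, hv⟩

end NetFlow
namespace NetFlow

variable {V : Type*} [Fintype V] [DecidableEq V]

set_option linter.unusedSectionVars false

/-! ### seqFlow is a flow -/

lemma beq_prod_congr (a b : V × V) :
    (@BEq.beq _ instBEqProd a b) = (@BEq.beq _ instBEqOfDecidableEq a b) := by
  show (a.1 == b.1 && a.2 == b.2) = decide (a = b)
  by_cases h1 : a.1 = b.1 <;> by_cases h2 : a.2 = b.2 <;>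
    simp [h1, h2, Prod.ext_iff]

lemma prod_count_cons (b : V × V) (t : List (V × V)) (a : V × V) :
    (b :: t).count a = t.count a + if b = a then 1 else 0 := by
  rw [List.count_cons, beq_prod_congr]
  by_cases h : b = a
  · subst h; show _ + (if decide (b = b) = true then 1 else 0) = _; simp
  · show _ + (if decide (b = a) = true then 1 else 0) = _; simp [h]

lemma count_nodup_indicator {l : List (V × V)} (h : l.Nodup) (a : V × V) :
    l.count a = if a ∈ l then 1 else 0 := by
  induction l with
  | nil => simp
  | cons b t ih =>
    obtain ⟨hb, ht⟩ := List.nodup_cons.mp h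
    rw [prod_count_cons, ih ht]
    rcases eq_or_ne b a with rfl | hba
    · simp [hb]
    · have hab : a ≠ b := fun hh => hba hh.symm
      simp [hab, hba]

lemma chi_eq_indicator {p : List V} (hp : p.Nodup) (u v : V) :
    chi p u v = if (u, v) ∈ pathArcs p then 1 else 0 :=
  count_nodup_indicator (pathArcs_nodup hp) (u, v)

lemma chi_le_one {p : List V} (hp : p.Nodup) (u v : V) : chi p u v ≤ 1 := by
  rw [chi_eq_indicator hp]
  split <;> omega

lemma seqFlow_eq_sum_chi {γ : List (List V)} (h : ∀ p ∈ γ, p.Nodup) (u v : V) :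
    seqFlow γ u v = (γ.map fun p => chi p u v).sum := by
  induction γ with
  | nil => rfl
  | cons p t ih =>
    unfold seqFlow at *
    rw [List.countP_cons, List.map_cons, List.sum_cons,
      ih (fun q hq => h q (List.mem_cons_of_mem _ hq)),
      chi_eq_indicator (h p (List.mem_cons_self)) u v]
    simp only [decide_eq_true_eq]
    omega

lemma sum_univ_listsum {α : Type*} (l : List α) (g : V → α → ℕ) :
    ∑ u, (l.map (g u)).sum = (l.map fun p => ∑ u, g u p).sum := by
  induction l with
  | nil => simp
  | cons a t ih => simp [Finset.sum_add_distrib, ih]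

lemma list_sum_succ {α : Type*} (l : List α) (f g : α → ℕ)
    (h : ∀ p ∈ l, f p = g p + 1) :
    (l.map f).sum = (l.map g).sum + l.length := by
  induction l with
  | nil => simp
  | cons a t ih =>
    rw [List.map_cons, List.map_cons, List.sum_cons, List.sum_cons, List.length_cons,
      h a (List.mem_cons_self), ih (fun p hp => h p (List.mem_cons_of_mem _ hp))]
    omega

lemma hpath_nodup {N : Network V} {y z : V} {γ : List (List V)}
    (h : IsPathSeq N y z γ) : ∀ p ∈ γ, p.Nodup :=
  fun p hp => ((h.1 p hp).2.1)

lemma seqFlow_out {N : Network V} {y z : V} {γ : List (List V)}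
    (h : IsPathSeq N y z γ) (v : V) :
    ∑ u, seqFlow γ v u = (γ.map fun p => p.dropLast.count v).sum := by
  have h1 : ∀ u, seqFlow γ v u = (γ.map fun p => chi p v u).sum :=
    fun u => seqFlow_eq_sum_chi (hpath_nodup h) v u
  rw [Finset.sum_congr rfl fun u _ => h1 u, sum_univ_listsum]
  congr 1
  exact List.map_congr_left fun p _ => sum_chi_out p v

lemma seqFlow_in {N : Network V} {y z : V} {γ : List (List V)}
    (h : IsPathSeq N y z γ) (v : V) :
    ∑ u, seqFlow γ u v = (γ.map fun p => p.tail.count v).sum := by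
  have h1 : ∀ u, seqFlow γ u v = (γ.map fun p => chi p u v).sum :=
    fun u => seqFlow_eq_sum_chi (hpath_nodup h) u v
  rw [Finset.sum_congr rfl fun u _ => h1 u, sum_univ_listsum]
  congr 1
  exact List.map_congr_left fun p _ => sum_chi_in p v

lemma seqFlow_isFlow {N : Network V} {y z : V} {γ : List (List V)}
    (h : IsPathSeq N y z γ) : IsFlow N y z (seqFlow γ) := by
  refine ⟨h.2, fun x hxy hxz => ?_⟩
  rw [seqFlow_out h x, seqFlow_in h x]
  congr 1
  apply List.map_congr_left
  intro p hp
  obtain ⟨-, -, hh, hl, -⟩ := h.1 p hp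
  have e1 := count_eq_tail_count hh x
  have e2 := count_eq_dropLast_count hl x
  rw [if_neg hxy] at e1
  rw [if_neg hxz] at e2
  omega

lemma seqFlow_value {N : Network V} {y z : V} {γ : List (List V)} (hyz : y ≠ z)
    (h : IsPathSeq N y z γ) : flowValue (seqFlow γ) y = (γ.length : ℤ) := by
  unfold flowValue
  have c1 : ∑ u, ((seqFlow γ y u : ℕ) : ℤ) = ((∑ u, seqFlow γ y u : ℕ) : ℤ) := by push_cast; rfl
  have c2 : ∑ u, ((seqFlow γ u y : ℕ) : ℤ) = ((∑ u, seqFlow γ u y : ℕ) : ℤ) := by push_cast; rfl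
  rw [c1, c2, seqFlow_out h y, seqFlow_in h y]
  have key : (γ.map fun p => p.dropLast.count y).sum
      = (γ.map fun p => p.tail.count y).sum + γ.length := by
    apply list_sum_succ
    intro p hp
    obtain ⟨-, -, hh, hl, -⟩ := h.1 p hp
    have e1 := count_eq_tail_count hh y
    have e2 := count_eq_dropLast_count hl y
    rw [if_pos rfl] at e1
    rw [if_neg hyz] at e2
    omega
  rw [key]
  push_cast
  ring

lemma isPathSeq_nil (N : Network V) (y z : V) : IsPathSeq N y z ([] : List (List V)) :=
  ⟨fun p hp => absurd hp List.not_mem_nil, fun u v => by simp⟩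

lemma seqSet_bddAbove (N : Network V) (y z : V) (hyz : y ≠ z) :
    BddAbove {m : ℕ | ∃ γ : List (List V), IsPathSeq N y z γ ∧ γ.length = m} := by
  refine ⟨∑ u, N.c y u, ?_⟩
  rintro m ⟨γ, hγ, rfl⟩
  have h1 := flowValue_le (seqFlow_isFlow hγ)
  rw [seqFlow_value hyz hγ] at h1
  have h2 : ((∑ u, N.c y u : ℕ) : ℤ) = ∑ u, (N.c y u : ℤ) := by push_cast; rfl
  rw [← h2] at h1
  exact_mod_cast h1

lemma exists_maxSeq (N : Network V) (y z : V) (hyz : y ≠ z) :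
    ∃ γ, γ ∈ MaxSeqs N y z := by
  have h := Nat.sSup_mem (s := {m : ℕ | ∃ γ : List (List V), IsPathSeq N y z γ ∧ γ.length = m})
    ⟨0, ⟨[], isPathSeq_nil N y z, rfl⟩⟩ (seqSet_bddAbove N y z hyz)
  obtain ⟨γ, hγ, hl⟩ := h
  exact ⟨γ, hγ, hl⟩

lemma le_maxSeqLen {N : Network V} {y z : V} {γ : List (List V)} (hyz : y ≠ z)
    (h : IsPathSeq N y z γ) : γ.length ≤ maxSeqLen N y z :=
  le_csSup (seqSet_bddAbove N y z hyz) ⟨γ, h, rfl⟩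

lemma maxSeqLen_le_maxFlowValue (N : Network V) (y z : V) (hyz : y ≠ z) :
    maxSeqLen N y z ≤ maxFlowValue N y z := by
  obtain ⟨γ, hγ, hl⟩ := exists_maxSeq N y z hyz
  rw [← hl]
  exact le_maxFlowValue (seqFlow_isFlow hγ) (seqFlow_value hyz hγ)

end NetFlow
namespace NetFlow

variable {V : Type*} [Fintype V] [DecidableEq V]

set_option linter.unusedSectionVars false

/-! ### Extraction of nodup chains and cycles -/

lemma exists_nodup_chain {R : V → V → Prop} {a b : V}
    (h : Relation.ReflTransGen R a b) (hab : a ≠ b) :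
    ∃ p : List V, p.Chain' R ∧ p.head? = some a ∧ p.getLast? = some b ∧
      p.Nodup ∧ 2 ≤ p.length := by
  induction h with
  | refl => exact absurd rfl hab
  | @tail c b h1 h2 ih =>
    rcases eq_or_ne a c with rfl | hac
    · refine ⟨[a, b], ?_, rfl, rfl, ?_, by simp⟩
      · exact List.isChain_pair.mpr h2
      · simp [hab]
    · obtain ⟨p, hc, hh, hl, hn, hlen⟩ := ih hac
      by_cases hbp : b ∈ p
      · obtain ⟨q, r, rfl⟩ := List.append_of_mem hbp
        have hq : q ≠ [] := by
          rintro rfl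
          simp only [List.nil_append, List.head?_cons, Option.some.injEq] at hh
          exact hab hh.symm
        have hpre : (q ++ [b]) <+: (q ++ b :: r) := ⟨r, by simp⟩
        refine ⟨q ++ [b], ?_, ?_, ?_, ?_, ?_⟩
        · exact hc.prefix hpre
        · rw [List.head?_append_of_ne_nil _ hq] at hh ⊢
          exact hh
        · simp
        · exact hn.sublist hpre.sublist
        · have h1 : 1 ≤ q.length := List.length_pos_iff.mpr hq
          have h2 : (q ++ [b]).length = q.length + 1 := by simp
          omega
      · refine ⟨p ++ [b], ?_, ?_, ?_, ?_, ?_⟩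
        · apply List.IsChain.append hc (List.isChain_singleton b)
          intro x hx y hy
          simp only [List.head?_cons, Option.mem_def, Option.some.injEq] at hy
          subst hy
          rw [Option.mem_def, hl] at hx
          cases hx
          exact h2
        · have hp : p ≠ [] := by rintro rfl; simp at hh
          rw [List.head?_append_of_ne_nil _ hp]
          exact hh
        · simp
        · rw [List.nodup_append]
          exact ⟨hn, List.nodup_singleton b, by intro a ha c hc; simp at hc; subst hc; exact fun h => hbp (h ▸ ha)⟩
        · have : (p ++ [b]).length = p.length + 1 := by simp
          omega

lemma iterate_chain {R : V → V → Prop} {σ : V → V} {b : V}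
    (hb : ∃ u, R u b)
    (hσ : ∀ v, (∃ u, R u v) → R v (σ v)) :
    ∀ n, R (σ^[n] b) (σ^[n+1] b) := by
  intro n
  induction n with
  | zero => simpa using hσ b hb
  | succ n ih =>
    have hex : ∃ u, R u (σ^[n+1] b) := ⟨σ^[n] b, ih⟩
    have h2 := hσ _ hex
    rw [Function.iterate_succ_apply' σ (n+1) b]
    exact h2

lemma exists_cycle_list {R : V → V → Prop}
    (hirr : ∀ v, ¬ R v v)
    (hserial : ∀ v, (∃ u, R u v) → ∃ w, R v w)
    {a b : V} (hab : R a b) :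
    ∃ (q : List V) (x : V), q.Nodup ∧ 2 ≤ q.length ∧
      (q ++ [x]).Chain' R ∧ q.head? = some x := by
  classical
  let σ : V → V := fun v => if h : ∃ w, R v w then h.choose else v
  have hσ : ∀ v, (∃ u, R u v) → R v (σ v) := by
    intro v hv
    have h2 := hserial v hv
    simp only [σ, dif_pos h2]
    exact h2.choose_spec
  have hb : ∃ u, R u b := ⟨a, hab⟩
  set g : ℕ → V := fun n => σ^[n] b with hg
  have hstep : ∀ n, R (g n) (g (n + 1)) := iterate_chain hb hσ
  have hph : ∃ n, ∃ i < n, g i = g n := by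
    have hcard : (Finset.univ : Finset V).card < (Finset.range (Fintype.card V + 1)).card := by
      simp
    obtain ⟨i, _, j, _, hij, he⟩ :=
      Finset.exists_ne_map_eq_of_card_lt_of_maps_to hcard
        (fun n _ => Finset.mem_univ (g n))
    rcases lt_or_gt_of_ne hij with h | h
    · exact ⟨j, i, h, he⟩
    · exact ⟨i, j, h, he.symm⟩
  obtain ⟨i0, hi0m, hgi0⟩ : ∃ i < Nat.find hph, g i = g (Nat.find hph) := Nat.find_spec hph
  set m := Nat.find hph with hm
  have hmin : ∀ k < m, ¬ ∃ i < k, g i = g k := fun k hk => Nat.find_min hph hk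
  have hlen2 : 2 ≤ m - i0 := by
    by_contra hcon
    have h1 : i0 + 1 = m := by omega
    have hs := hstep i0
    rw [h1, ← hgi0] at hs
    exact hirr _ hs
  set q := (List.range (m - i0)).map (fun k => g (i0 + k)) with hq
  have hqlen : q.length = m - i0 := by simp [hq]
  have hqne : q ≠ [] := by
    intro hcon
    rw [hcon] at hqlen
    simp at hqlen
    omega
  have hq_get : ∀ j (hj : j < m - i0), q.get ⟨j, by rwa [hqlen]⟩ = g (i0 + j) := by
    intro j hj
    simp [hq]
  have hchainq : q.Chain' R := by
    change List.IsChain R q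
    rw [List.isChain_iff_getElem]
    intro k hk
    rw [hqlen] at hk
    show R (q.get ⟨k, by omega⟩) (q.get ⟨k + 1, by omega⟩)
    rw [hq_get k (by omega), hq_get (k+1) (by omega)]
    rw [show i0 + (k + 1) = (i0 + k) + 1 by omega]
    exact hstep (i0 + k)
  have hqlast : q.getLast? = some (g (m - 1)) := by
    have hsplit : m - i0 = (m - i0 - 1) + 1 := by omega
    have harith : i0 + (m - i0 - 1) = m - 1 := by omega
    rw [hq, hsplit, List.range_succ, List.map_append, List.map_singleton,
      List.getLast?_concat, harith]
  have hqhead : q.head? = some (g i0) := by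
    have hsplit : m - i0 = (m - i0 - 1) + 1 := by omega
    rw [hq, hsplit, List.range_succ_eq_map]
    simp
  refine ⟨q, g i0, ?_, ?_, ?_, hqhead⟩
  · apply List.Nodup.map_on
    · intro k1 hk1 k2 hk2 he
      rw [List.mem_range] at hk1 hk2
      by_contra hne
      rcases lt_or_gt_of_ne hne with h | h
      · exact hmin (i0 + k2) (by omega) ⟨i0 + k1, by omega, he⟩
      · exact hmin (i0 + k1) (by omega) ⟨i0 + k2, by omega, he.symm⟩
    · exact List.nodup_range
  · omega
  · change List.IsChain R (q ++ [g i0])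
    rw [List.isChain_append]
    refine ⟨hchainq, List.isChain_singleton _, ?_⟩
    intro u hu v hv
    rw [Option.mem_def, hqlast] at hu
    cases hu
    simp only [List.head?_cons, Option.mem_def, Option.some.injEq] at hv
    subst hv
    have h3 := hstep (m - 1)
    rw [show m - 1 + 1 = m by omega, ← hgi0] at h3
    exact h3

end NetFlow
namespace NetFlow

variable {V : Type*} [Fintype V] [DecidableEq V]

set_option linter.unusedSectionVars false

/-! ### Flow decomposition -/

lemma pathArcs_length (p : List V) : (pathArcs p).length = p.length - 1 := by
  unfold pathArcs
  rw [List.length_zip, List.length_tail]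
  omega

lemma pathArcs_nodup' {p : List V} (hp : p.dropLast.Nodup) : (pathArcs p).Nodup := by
  rw [← pathArcs_map_fst] at hp
  exact hp.of_map _

lemma chi_le_flow {f : V → V → ℕ} {p : List V} (hn : (pathArcs p).Nodup)
    (hc : p.Chain' fun u v => 1 ≤ f u v) (u v : V) : chi p u v ≤ f u v := by
  show (pathArcs p).count (u, v) ≤ f u v
  rw [count_nodup_indicator hn]
  rcases Decidable.em ((u, v) ∈ pathArcs p) with h | h
  · rw [if_pos h]
    exact rel_of_mem_pathArcs (R := fun u v => 1 ≤ f u v) hc h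
  · rw [if_neg h]
    exact Nat.zero_le _

lemma sub_sum_out (f : V → V → ℕ) (p : List V) (hle : ∀ u v, chi p u v ≤ f u v) (v : V) :
    (∑ u, (f v u - chi p v u)) + p.dropLast.count v = ∑ u, f v u := by
  rw [← sum_chi_out p v, ← Finset.sum_add_distrib]
  exact Finset.sum_congr rfl fun u _ => Nat.sub_add_cancel (hle v u)

lemma sub_sum_in (f : V → V → ℕ) (p : List V) (hle : ∀ u v, chi p u v ≤ f u v) (v : V) :
    (∑ u, (f u v - chi p u v)) + p.tail.count v = ∑ u, f u v := by
  rw [← sum_chi_in p v, ← Finset.sum_add_distrib]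
  exact Finset.sum_congr rfl fun u _ => Nat.sub_add_cancel (hle u v)

lemma sub_sum_total (f : V → V → ℕ) (p : List V) (hle : ∀ u v, chi p u v ≤ f u v) :
    (∑ u, ∑ v, (f u v - chi p u v)) + (pathArcs p).length = ∑ u, ∑ v, f u v := by
  have h1 : ∑ u, ∑ v, chi p u v = (pathArcs p).length := by
    have := sum_sum_count (V := V) (pathArcs p)
    rw [← this]
    rfl
  rw [← h1, ← Finset.sum_add_distrib]
  apply Finset.sum_congr rfl
  intro u _
  rw [← Finset.sum_add_distrib]
  exact Finset.sum_congr rfl fun v _ => Nat.sub_add_cancel (hle u v)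

lemma balance_z {N : Network V} {y z : V} {f : V → V → ℕ} (hf : IsFlow N y z f)
    (hyz : y ≠ z) (hv : flowValue f y = 0) :
    ∑ u, f u z = ∑ u, f z u := by
  have htot : ∑ x, ((∑ u, (f x u : ℤ)) - ∑ u, (f u x : ℤ)) = 0 := by
    rw [Finset.sum_sub_distrib]
    rw [Finset.sum_comm (f := fun x u => (f x u : ℤ))]
    ring
  have hsingle : ∑ x, ((∑ u, (f x u : ℤ)) - ∑ u, (f u x : ℤ))
      = (∑ u, (f z u : ℤ)) - ∑ u, (f u z : ℤ) := by
    apply Finset.sum_eq_single_of_mem z (Finset.mem_univ z)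
    intro x _ hxz
    rcases eq_or_ne x y with rfl | hxy
    · exact hv
    · have h := hf.2 x hxy hxz
      have h' : ((∑ u, f u x : ℕ) : ℤ) = ((∑ u, f x u : ℕ) : ℤ) := by rw [h]
      push_cast at h'
      omega
  rw [htot] at hsingle
  have c1 : ((∑ u, f z u : ℕ) : ℤ) = ∑ u, (f z u : ℤ) := by push_cast; rfl
  have c2 : ((∑ u, f u z : ℕ) : ℤ) = ∑ u, (f u z : ℤ) := by push_cast; rfl
  have : ((∑ u, f u z : ℕ) : ℤ) = ((∑ u, f z u : ℕ) : ℤ) := by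
    rw [c1, c2]; omega
  exact_mod_cast this

lemma cycle_tail_count {q : List V} {x : V} (hh : q.head? = some x) (v : V) :
    (q ++ [x]).tail.count v = (q ++ [x]).dropLast.count v := by
  cases q with
  | nil => simp at hh
  | cons c t =>
    simp only [List.head?_cons, Option.some.injEq] at hh
    subst hh
    rw [List.dropLast_concat]
    simp only [List.cons_append, List.tail_cons]
    simp [List.count_append, List.count_cons, Nat.add_comm]

theorem exists_decomposition {N : Network V} {y z : V} (hyz : y ≠ z) :
    ∀ n (f : V → V → ℕ), (∑ u, ∑ v, f u v) = n → IsFlow N y z f →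
      0 ≤ flowValue f y → ∃ γ w, IsDecomposition N y z f γ w := by
  intro n
  induction n using Nat.strong_induction_on with
  | _ n IH =>
    intro f hsum hf hv
    rcases Nat.eq_zero_or_pos n with rfl | hnpos
    · -- zero flow
      have hzero : ∀ u v, f u v = 0 := by
        intro u v
        have h1 := Finset.sum_eq_zero_iff.mp hsum u (Finset.mem_univ u)
        exact Finset.sum_eq_zero_iff.mp h1 v (Finset.mem_univ v)
      have hval : flowValue f y = 0 := by
        unfold flowValue
        simp [hzero]
      refine ⟨[], [], by simp, by simp, by simp [hval], fun u v => by simp [hzero]⟩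
    rcases lt_or_eq_of_le hv with hvpos | hval0
    · -- positive value: extract a path
      classical
      set R := fun u v => 1 ≤ f u v with hR
      have hreach : Relation.ReflTransGen R y z := by
        by_contra hcon
        set S := Finset.univ.filter (fun v => Relation.ReflTransGen R y v) with hS
        have hyS : y ∈ S := by
          simp only [hS, Finset.mem_filter]
          exact ⟨Finset.mem_univ y, Relation.ReflTransGen.refl⟩
        have hzS : z ∉ S := by
          simp only [hS, Finset.mem_filter]
          rintro ⟨-, hcc⟩
          exact hcon hcc
        have hcut := flowValue_cut hf S hyS hzS
        have hterm : ∀ u ∈ S, ∀ v ∈ Sᶜ, ((f u v : ℤ) - f v u) ≤ 0 := by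
          intro u hu v hv'
          have hvS : v ∉ S := Finset.mem_compl.mp hv'
          have hfz : f u v = 0 := by
            by_contra hne
            have h1 : 1 ≤ f u v := Nat.one_le_iff_ne_zero.mpr hne
            have hu' : Relation.ReflTransGen R y u := by
              simp only [hS, Finset.mem_filter] at hu
              exact hu.2
            have hv2 : v ∈ S := by
              simp only [hS, Finset.mem_filter]
              exact ⟨Finset.mem_univ v, hu'.tail h1⟩
            exact hvS hv2
          rw [hfz]
          push_cast
          omega
        have hle0 : flowValue f y ≤ 0 := by
          rw [hcut]
          apply Finset.sum_nonpos
          intro u hu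
          exact Finset.sum_nonpos fun v hv' => hterm u hu v hv'
        omega
      obtain ⟨p, hc, hh, hl, hn, hlen⟩ := exists_nodup_chain hreach hyz
      have hpath : IsPath N y z p :=
        ⟨hlen, hn, hh, hl, hc.imp fun a b hab => le_trans hab (hf.1 a b)⟩
      have hle : ∀ u v, chi p u v ≤ f u v := chi_le_flow (pathArcs_nodup hn) hc
      set f' := fun u v => f u v - chi p u v with hf'
      have hcap' : ∀ u v, f' u v ≤ N.c u v :=
        fun u v => le_trans (Nat.sub_le _ _) (hf.1 u v)
      have hcons' : ∀ x, x ≠ y → x ≠ z → ∑ u, f' u x = ∑ u, f' x u := by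
        intro x hxy hxz
        have e1 : (∑ u, f' x u) + p.dropLast.count x = ∑ u, f x u := sub_sum_out f p hle x
        have e2 : (∑ u, f' u x) + p.tail.count x = ∑ u, f u x := sub_sum_in f p hle x
        have e3 := count_eq_tail_count hh x
        have e4 := count_eq_dropLast_count hl x
        rw [if_neg hxy] at e3
        rw [if_neg hxz] at e4
        have e5 := hf.2 x hxy hxz
        omega
      have hflow' : IsFlow N y z f' := ⟨hcap', hcons'⟩
      have hval' : flowValue f' y = flowValue f y - 1 := by
        have e1 : (∑ u, f' y u) + p.dropLast.count y = ∑ u, f y u := sub_sum_out f p hle y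
        have e2 : (∑ u, f' u y) + p.tail.count y = ∑ u, f u y := sub_sum_in f p hle y
        have e3 := count_eq_tail_count hh y
        have e4 := count_eq_dropLast_count hl y
        rw [if_pos rfl] at e3
        rw [if_neg hyz] at e4
        have g1 : flowValue f' y = ((∑ u, f' y u : ℕ) : ℤ) - ((∑ u, f' u y : ℕ) : ℤ) := by
          unfold flowValue; push_cast; ring
        have g2 : flowValue f y = ((∑ u, f y u : ℕ) : ℤ) - ((∑ u, f u y : ℕ) : ℤ) := by
          unfold flowValue; push_cast; ring
        rw [g1, g2]
        omega
      have hsum' : (∑ u, ∑ v, f' u v) + (pathArcs p).length = ∑ u, ∑ v, f u v :=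
        sub_sum_total f p hle
      have harc : 1 ≤ (pathArcs p).length := by
        rw [pathArcs_length]
        omega
      obtain ⟨γ, w, hγ, hw, hlen', hdecomp⟩ :=
        IH (∑ u, ∑ v, f' u v) (by omega) f' rfl hflow' (by omega)
      refine ⟨p :: γ, w, ?_, hw, ?_, ?_⟩
      · intro q hq
        rcases List.mem_cons.mp hq with rfl | hq'
        · exact hpath
        · exact hγ q hq'
      · rw [List.length_cons]
        push_cast
        omega
      · intro u v
        have h1 := hdecomp u v
        have h2 : f u v = f' u v + chi p u v := (Nat.sub_add_cancel (hle u v)).symm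
        rw [List.map_cons, List.sum_cons]
        omega
    · -- zero value: extract a cycle
      classical
      have hex : ∃ a b, 1 ≤ f a b := by
        by_contra hcon
        push_neg at hcon
        have : ∀ u v, f u v = 0 := fun u v => by have := hcon u v; omega
        have : (∑ u, ∑ v, f u v) = 0 := by simp [this]
        omega
      obtain ⟨a, b, hfab⟩ := hex
      have hbal : ∀ v, ∑ u, f u v = ∑ u, f v u := by
        intro v
        rcases eq_or_ne v y with rfl | hvy
        · unfold flowValue at hval0
          have c3 : ∑ u, ((f v u : ℕ) : ℤ) = ((∑ u, f v u : ℕ) : ℤ) := by push_cast; rfl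
          have c4 : ∑ u, ((f u v : ℕ) : ℤ) = ((∑ u, f u v : ℕ) : ℤ) := by push_cast; rfl
          rw [c3, c4] at hval0
          omega
        rcases eq_or_ne v z with rfl | hvz
        · exact balance_z hf hyz hval0.symm
        · exact hf.2 v hvy hvz
      have hirr : ∀ v, ¬ (1 ≤ f v v) := by
        intro v hcon
        have h1 := hf.1 v v
        rw [N.no_loop v] at h1
        omega
      have hserial : ∀ v, (∃ u, 1 ≤ f u v) → ∃ w, 1 ≤ f v w := by
        intro v ⟨u, hu⟩
        by_contra hcon
        push_neg at hcon
        have h1 : ∑ w, f v w = 0 := Finset.sum_eq_zero fun w _ => by have := hcon w; omega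
        have h2 : 1 ≤ ∑ w, f w v :=
          le_trans hu (Finset.single_le_sum (f := fun w => f w v) (fun _ _ => Nat.zero_le _)
            (Finset.mem_univ u))
        rw [hbal v] at h2
        omega
      obtain ⟨q, x, hqn, hqlen, hqchain, hqhead⟩ := exists_cycle_list hirr hserial hfab
      set cyc := q ++ [x] with hcyc
      have hqne : q ≠ [] := by rintro rfl; simp at hqlen
      have hcyclen : cyc.length = q.length + 1 := by simp [hcyc]
      have hdropLast : cyc.dropLast = q := List.dropLast_concat ..
      have hcychead : cyc.head? = some x := by
        rw [hcyc, List.head?_append_of_ne_nil _ hqne, hqhead]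
      have hcyclast : cyc.getLast? = some x := by
        rw [hcyc, List.getLast?_concat]
      have hiscyc : IsCycle N cyc := by
        refine ⟨by omega, hdropLast ▸ hqn, by rw [hcychead, hcyclast], ?_⟩
        exact hqchain.imp fun u v huv => le_trans huv (hf.1 u v)
      have harcnodup : (pathArcs cyc).Nodup := pathArcs_nodup' (hdropLast ▸ hqn)
      have hle : ∀ u v, chi cyc u v ≤ f u v := chi_le_flow harcnodup hqchain
      set f' := fun u v => f u v - chi cyc u v with hf'
      have hcap' : ∀ u v, f' u v ≤ N.c u v :=
        fun u v => le_trans (Nat.sub_le _ _) (hf.1 u v)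
      have hcount : ∀ v, cyc.tail.count v = cyc.dropLast.count v :=
        cycle_tail_count hqhead
      have hcons' : ∀ v, ∑ u, f' u v = ∑ u, f' v u := by
        intro v
        have e1 : (∑ u, f' v u) + cyc.dropLast.count v = ∑ u, f v u := sub_sum_out f cyc hle v
        have e2 : (∑ u, f' u v) + cyc.tail.count v = ∑ u, f u v := sub_sum_in f cyc hle v
        have e3 := hcount v
        have e4 := hbal v
        omega
      have hflow' : IsFlow N y z f' := ⟨hcap', fun x _ _ => hcons' x⟩
      have hval' : flowValue f' y = 0 := by
        have g1 : flowValue f' y = ((∑ u, f' y u : ℕ) : ℤ) - ((∑ u, f' u y : ℕ) : ℤ) := by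
          unfold flowValue; push_cast; ring
        have e5 := hcons' y
        rw [g1]
        omega
      have hsum' : (∑ u, ∑ v, f' u v) + (pathArcs cyc).length = ∑ u, ∑ v, f u v :=
        sub_sum_total f cyc hle
      have harc : 1 ≤ (pathArcs cyc).length := by
        rw [pathArcs_length]
        omega
      obtain ⟨γ, w, hγ, hw, hlen', hdecomp⟩ :=
        IH (∑ u, ∑ v, f' u v) (by omega) f' rfl hflow' (by omega)
      refine ⟨γ, cyc :: w, hγ, ?_, ?_, ?_⟩
      · intro q' hq'
        rcases List.mem_cons.mp hq' with rfl | hq''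
        · exact hiscyc
        · exact hw q' hq''
      · rw [hlen', hval', ← hval0]
      · intro u v
        have h1 := hdecomp u v
        have h2 : f u v = f' u v + chi cyc u v := (Nat.sub_add_cancel (hle u v)).symm
        rw [List.map_cons, List.sum_cons]
        omega

end NetFlow
namespace NetFlow

variable {V : Type*} [Fintype V] [DecidableEq V]

set_option linter.unusedSectionVars false

/-! ### Forward/backward arc counting -/

def fA (arcs : List (V × V)) (d : List Bool) : List (V × V) :=
  (arcs.zip d).filterMap fun e => if e.2 then some e.1 else none

def bA (arcs : List (V × V)) (d : List Bool) : List (V × V) :=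
  (arcs.zip d).filterMap fun e => if e.2 then none else some (e.1.2, e.1.1)

lemma forwardArcs_eq (p : List V) (d : List Bool) :
    forwardArcs p d = fA (pathArcs p) d := rfl

lemma backwardArcs_eq (p : List V) (d : List Bool) :
    backwardArcs p d = bA (pathArcs p) d := rfl

lemma fA_nil (d : List Bool) : fA ([] : List (V × V)) d = [] := by
  simp [fA]

lemma bA_nil (d : List Bool) : bA ([] : List (V × V)) d = [] := by
  simp [bA]

lemma fA_nil' (arcs : List (V × V)) : fA arcs [] = [] := by
  simp [fA]

lemma bA_nil' (arcs : List (V × V)) : bA arcs [] = [] := by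
  simp [bA]

lemma fA_cons (a : V × V) (arcs : List (V × V)) (b : Bool) (d : List Bool) :
    fA (a :: arcs) (b :: d) = if b then a :: fA arcs d else fA arcs d := by
  cases b <;> simp [fA, List.filterMap_cons]

lemma bA_cons (a : V × V) (arcs : List (V × V)) (b : Bool) (d : List Bool) :
    bA (a :: arcs) (b :: d) = if b then bA arcs d else (a.2, a.1) :: bA arcs d := by
  cases b <;> simp [bA, List.filterMap_cons]

lemma fb_out (v : V) : ∀ (d : List Bool) (arcs : List (V × V)),
    arcs.length = d.length →
    (fA arcs d).countP (fun a => decide (a.1 = v)) +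
      (bA arcs d).countP (fun a => decide (a.2 = v)) =
    arcs.countP (fun a => decide (a.1 = v)) := by
  intro d
  induction d with
  | nil =>
    intro arcs h
    rw [List.length_nil, List.length_eq_zero_iff] at h
    subst h
    simp [fA_nil', bA_nil']
  | cons b db ih =>
    intro arcs h
    cases arcs with
    | nil => simp at h
    | cons a t =>
      simp only [List.length_cons, Nat.add_right_cancel_iff] at h
      rw [fA_cons, bA_cons]
      cases b
      · rw [if_neg Bool.false_ne_true, if_neg Bool.false_ne_true]
        simp only [List.countP_cons]
        have := ih t h
        omega
      · rw [if_pos rfl, if_pos rfl]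
        simp only [List.countP_cons]
        have := ih t h
        omega

lemma fb_in (v : V) : ∀ (d : List Bool) (arcs : List (V × V)),
    arcs.length = d.length →
    (fA arcs d).countP (fun a => decide (a.2 = v)) +
      (bA arcs d).countP (fun a => decide (a.1 = v)) =
    arcs.countP (fun a => decide (a.2 = v)) := by
  intro d
  induction d with
  | nil =>
    intro arcs h
    rw [List.length_nil, List.length_eq_zero_iff] at h
    subst h
    simp [fA_nil', bA_nil']
  | cons b db ih =>
    intro arcs h
    cases arcs with
    | nil => simp at h
    | cons a t =>
      simp only [List.length_cons, Nat.add_right_cancel_iff] at h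
      rw [fA_cons, bA_cons]
      cases b
      · rw [if_neg Bool.false_ne_true, if_neg Bool.false_ne_true]
        simp only [List.countP_cons]
        have := ih t h
        omega
      · rw [if_pos rfl, if_pos rfl]
        simp only [List.countP_cons]
        have := ih t h
        omega

lemma fA_subset {arcs : List (V × V)} {d : List Bool} {a : V × V}
    (h : a ∈ fA arcs d) : a ∈ arcs := by
  unfold fA at h
  obtain ⟨e, he, hee⟩ := List.mem_filterMap.mp h
  have h1 : e.1 = a := by
    by_cases hb : e.2 <;> simp [hb] at hee
    exact hee
  exact h1 ▸ (List.of_mem_zip he).1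

lemma bA_mem {arcs : List (V × V)} {d : List Bool} {a : V × V}
    (h : a ∈ bA arcs d) : (a.2, a.1) ∈ arcs := by
  unfold bA at h
  obtain ⟨e, he, hee⟩ := List.mem_filterMap.mp h
  by_cases hb : e.2 <;> simp [hb] at hee
  have h1 : e.1 = (a.2, a.1) := by
    rw [← hee]
  exact h1 ▸ (List.of_mem_zip he).1

lemma fA_nodup {arcs : List (V × V)} (h : arcs.Nodup) (d : List Bool) :
    (fA arcs d).Nodup := by
  induction arcs generalizing d with
  | nil => simp [fA_nil]
  | cons a t ih =>
    cases d with
    | nil => simp [fA_nil']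
    | cons b db =>
      obtain ⟨hat, ht⟩ := List.nodup_cons.mp h
      rw [fA_cons]
      cases b
      · rw [if_neg Bool.false_ne_true]
        exact ih ht db
      · rw [if_pos rfl]
        rw [List.nodup_cons]
        exact ⟨fun hc => hat (fA_subset hc), ih ht db⟩

lemma bA_nodup {arcs : List (V × V)} (h : arcs.Nodup) (d : List Bool) :
    (bA arcs d).Nodup := by
  induction arcs generalizing d with
  | nil => simp [bA_nil]
  | cons a t ih =>
    cases d with
    | nil => simp [bA_nil']
    | cons b db =>
      obtain ⟨hat, ht⟩ := List.nodup_cons.mp h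
      rw [bA_cons]
      cases b
      · rw [if_neg Bool.false_ne_true]
        rw [List.nodup_cons]
        refine ⟨fun hc => ?_, ih ht db⟩
        have := bA_mem hc
        simp at this
        exact hat this
      · rw [if_pos rfl]
        exact ih ht db

lemma fA_map_mem {arcs : List (V × V)} {dec : V × V → Bool} {a : V × V}
    (h : a ∈ fA arcs (arcs.map dec)) : a ∈ arcs ∧ dec a = true := by
  induction arcs with
  | nil => simp [fA_nil] at h
  | cons c t ih =>
    rw [List.map_cons, fA_cons] at h
    by_cases hb : dec c
    · rw [if_pos hb] at h
      rcases List.mem_cons.mp h with rfl | h'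
      · exact ⟨List.mem_cons_self, hb⟩
      · obtain ⟨h1, h2⟩ := ih h'
        exact ⟨List.mem_cons_of_mem _ h1, h2⟩
    · rw [if_neg hb] at h
      obtain ⟨h1, h2⟩ := ih h
      exact ⟨List.mem_cons_of_mem _ h1, h2⟩

lemma bA_map_mem {arcs : List (V × V)} {dec : V × V → Bool} {a : V × V}
    (h : a ∈ bA arcs (arcs.map dec)) :
    (a.2, a.1) ∈ arcs ∧ dec (a.2, a.1) = false := by
  induction arcs with
  | nil => simp [bA_nil] at h
  | cons c t ih =>
    rw [List.map_cons, bA_cons] at h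
    by_cases hb : dec c
    · rw [if_pos hb] at h
      obtain ⟨h1, h2⟩ := ih h
      exact ⟨List.mem_cons_of_mem _ h1, h2⟩
    · rw [if_neg hb] at h
      rcases List.mem_cons.mp h with he | h'
      · have h1 : (a.2, a.1) = c := by
          rw [he]
        rw [h1]
        exact ⟨List.mem_cons_self, by rwa [Bool.not_eq_true] at hb⟩
      · obtain ⟨h1, h2⟩ := ih h'
        exact ⟨List.mem_cons_of_mem _ h1, h2⟩

lemma pathArcs_mem_get {p : List V} {u v : V} (h : (u, v) ∈ pathArcs p) :
    ∃ i, ∃ (hi : i + 1 < p.length),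
      p.get ⟨i, by omega⟩ = u ∧ p.get ⟨i + 1, hi⟩ = v := by
  induction p with
  | nil => simp [pathArcs] at h
  | cons a t ih =>
    cases t with
    | nil => simp [pathArcs] at h
    | cons b t' =>
      rw [pathArcs_cons₂, List.mem_cons] at h
      rcases h with h | h
      · rw [Prod.mk.injEq] at h
        exact ⟨0, by simp, by simp [h.1.symm], by simp [h.2.symm]⟩
      · obtain ⟨i, hi, h1, h2⟩ := ih h
        refine ⟨i + 1, by simpa using hi, ?_, ?_⟩
        · simpa using h1
        · simpa using h2

lemma pathArcs_antisymm {p : List V} (hp : p.Nodup) {u v : V}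
    (h1 : (u, v) ∈ pathArcs p) (h2 : (v, u) ∈ pathArcs p) : False := by
  obtain ⟨i, hi, hiu, hiv⟩ := pathArcs_mem_get h1
  obtain ⟨j, hj, hjv, hju⟩ := pathArcs_mem_get h2
  have e1 : p.get ⟨i, by omega⟩ = p.get ⟨j + 1, hj⟩ := by rw [hiu, hju]
  have e2 : p.get ⟨j, by omega⟩ = p.get ⟨i + 1, hi⟩ := by rw [hjv, hiv]
  have h3 := (List.Nodup.get_inj_iff hp).mp e1
  have h4 := (List.Nodup.get_inj_iff hp).mp e2
  rw [Fin.mk.injEq] at h3 h4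
  omega

end NetFlow
namespace NetFlow

variable {V : Type*} [Fintype V] [DecidableEq V]

set_option linter.unusedSectionVars false

/-! ### Augmenting paths -/

lemma exists_augPath {N : Network V} {y z : V} {f : V → V → ℕ} (hyz : y ≠ z)
    (hf : IsFlow N y z f) (hlt : flowValue f y < (maxFlowValue N y z : ℤ)) :
    ∃ p d, IsAugPath N y z f p d := by
  classical
  set res := fun u v => f u v < N.c u v ∨ 1 ≤ f v u with hres
  have hreach : Relation.ReflTransGen res y z := by
    by_contra hcon
    set S := Finset.univ.filter (fun v => Relation.ReflTransGen res y v) with hS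
    have hyS : y ∈ S := by
      simp only [hS, Finset.mem_filter]
      exact ⟨Finset.mem_univ y, Relation.ReflTransGen.refl⟩
    have hzS : z ∉ S := by
      simp only [hS, Finset.mem_filter]
      rintro ⟨-, hcc⟩
      exact hcon hcc
    have hkey : ∀ u ∈ S, ∀ v ∈ Sᶜ, f u v = N.c u v ∧ f v u = 0 := by
      intro u hu v hv'
      have hvS : v ∉ S := Finset.mem_compl.mp hv'
      have hnres : ¬ res u v := by
        intro hres'
        have hu' : Relation.ReflTransGen res y u := by
          simp only [hS, Finset.mem_filter] at hu
          exact hu.2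
        have : v ∈ S := by
          simp only [hS, Finset.mem_filter]
          exact ⟨Finset.mem_univ v, hu'.tail hres'⟩
        exact hvS this
      rw [hres] at hnres
      push_neg at hnres
      have h1 := hf.1 u v
      exact ⟨by omega, by omega⟩
    have hcutf := flowValue_cut hf S hyS hzS
    have hcutc : flowValue f y = ∑ u ∈ S, ∑ v ∈ Sᶜ, (N.c u v : ℤ) := by
      rw [hcutf]
      apply Finset.sum_congr rfl
      intro u hu
      apply Finset.sum_congr rfl
      intro v hv'
      obtain ⟨h1, h2⟩ := hkey u hu v hv'
      rw [h1, h2]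
      simp
    obtain ⟨g, hg, hgv⟩ := exists_isMaxFlow N y z
    have hcutg := flowValue_cut hg S hyS hzS
    have hgle : flowValue g y ≤ ∑ u ∈ S, ∑ v ∈ Sᶜ, (N.c u v : ℤ) := by
      rw [hcutg]
      apply Finset.sum_le_sum
      intro u _
      apply Finset.sum_le_sum
      intro v _
      have h1 : (g u v : ℤ) ≤ N.c u v := by exact_mod_cast hg.1 u v
      have h2 : (0 : ℤ) ≤ g v u := by positivity
      omega
    rw [hgv] at hgle
    rw [← hcutc] at hgle
    omega
  obtain ⟨p, hc, hh, hl, hn, hlen⟩ := exists_nodup_chain hreach hyz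
  refine ⟨p, (pathArcs p).map (fun a => decide (f a.1 a.2 < N.c a.1 a.2)),
    ⟨hlen, hn, hh, hl, ?_⟩, ?_, ?_⟩
  · rw [List.length_map, pathArcs_length]
    omega
  · intro a ha
    rw [forwardArcs_eq] at ha
    obtain ⟨h1, h2⟩ := fA_map_mem ha
    exact of_decide_eq_true h2
  · intro a ha
    rw [backwardArcs_eq] at ha
    obtain ⟨h1, h2⟩ := bA_map_mem ha
    have h3 : ¬ (f a.2 a.1 < N.c a.2 a.1) := of_decide_eq_false h2
    have h4 : res a.2 a.1 := rel_of_mem_pathArcs (R := res) hc h1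
    rcases h4 with h5 | h5
    · exact absurd h5 h3
    · exact h5

lemma augment {N : Network V} {y z : V} {f : V → V → ℕ} {p : List V} {d : List Bool}
    (hyz : y ≠ z) (hf : IsFlow N y z f) (ha : IsAugPath N y z f p d) :
    ∃ f', IsFlow N y z f' ∧ flowValue f' y = flowValue f y + 1 ∧
      ∀ x, (∑ u, (f' x u : ℤ)) ≤ (∑ u, (f x u : ℤ)) + 1 := by
  obtain ⟨⟨hlen2, hn, hh, hl, hdlen⟩, hfwd, hbwd⟩ := ha
  have harcs_len : (pathArcs p).length = d.length := by
    rw [pathArcs_length]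
    omega
  have harcnodup : (pathArcs p).Nodup := pathArcs_nodup hn
  have hfnodup : (forwardArcs p d).Nodup := by
    rw [forwardArcs_eq]
    exact fA_nodup harcnodup d
  have hbnodup : (backwardArcs p d).Nodup := by
    rw [backwardArcs_eq]
    exact bA_nodup harcnodup d
  have hdisj : ∀ u v : V, (u, v) ∈ forwardArcs p d → (u, v) ∈ backwardArcs p d → False := by
    intro u v h1 h2
    rw [forwardArcs_eq] at h1
    rw [backwardArcs_eq] at h2
    exact pathArcs_antisymm hn (fA_subset h1) (bA_mem h2)
  have hfcount := count_nodup_indicator hfnodup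
  have hbcount := count_nodup_indicator hbnodup
  have hF0 : ∀ u v, 0 ≤ (f u v : ℤ) + chiGen p d u v := by
    intro u v
    unfold chiGen
    rw [hfcount, hbcount]
    by_cases hfm : (u, v) ∈ forwardArcs p d <;> by_cases hb : (u, v) ∈ backwardArcs p d
    · exact (hdisj u v hfm hb).elim
    · rw [if_pos hfm, if_neg hb]
      push_cast
      omega
    · have h1 : 1 ≤ f u v := hbwd (u, v) hb
      rw [if_neg hfm, if_pos hb]
      push_cast
      omega
    · rw [if_neg hfm, if_neg hb]
      push_cast
      omega
  have hFc : ∀ u v, (f u v : ℤ) + chiGen p d u v ≤ N.c u v := by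
    intro u v
    unfold chiGen
    rw [hfcount, hbcount]
    by_cases hfm : (u, v) ∈ forwardArcs p d <;> by_cases hb : (u, v) ∈ backwardArcs p d
    · exact (hdisj u v hfm hb).elim
    · have h1 : f u v < N.c u v := hfwd (u, v) hfm
      rw [if_pos hfm, if_neg hb]
      push_cast
      omega
    · have h1 := hf.1 u v
      rw [if_neg hfm, if_pos hb]
      push_cast
      omega
    · have h1 := hf.1 u v
      rw [if_neg hfm, if_neg hb]
      push_cast
      omega
  set f' := fun u v => ((f u v : ℤ) + chiGen p d u v).toNat with hf'
  have hcast : ∀ u v, (f' u v : ℤ) = (f u v : ℤ) + chiGen p d u v :=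
    fun u v => Int.toNat_of_nonneg (hF0 u v)
  have hchi_out : ∀ x, ∑ u, chiGen p d x u
      = (((forwardArcs p d).countP (fun a => decide (a.1 = x)) : ℕ) : ℤ)
        - (((backwardArcs p d).countP (fun a => decide (a.1 = x)) : ℕ) : ℤ) := by
    intro x
    unfold chiGen
    rw [Finset.sum_sub_distrib]
    congr 1
    · have h1 : ∑ u, ((forwardArcs p d).count (x, u) : ℤ)
          = ((∑ u, (forwardArcs p d).count (x, u) : ℕ) : ℤ) := by push_cast; rfl
      rw [h1, sum_count_fst]
    · have h1 : ∑ u, ((backwardArcs p d).count (x, u) : ℤ)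
          = ((∑ u, (backwardArcs p d).count (x, u) : ℕ) : ℤ) := by push_cast; rfl
      rw [h1, sum_count_fst]
  have hchi_in : ∀ x, ∑ u, chiGen p d u x
      = (((forwardArcs p d).countP (fun a => decide (a.2 = x)) : ℕ) : ℤ)
        - (((backwardArcs p d).countP (fun a => decide (a.2 = x)) : ℕ) : ℤ) := by
    intro x
    unfold chiGen
    rw [Finset.sum_sub_distrib]
    congr 1
    · have h1 : ∑ u, ((forwardArcs p d).count (u, x) : ℤ)
          = ((∑ u, (forwardArcs p d).count (u, x) : ℕ) : ℤ) := by push_cast; rfl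
      rw [h1, sum_count_snd]
    · have h1 : ∑ u, ((backwardArcs p d).count (u, x) : ℤ)
          = ((∑ u, (backwardArcs p d).count (u, x) : ℕ) : ℤ) := by push_cast; rfl
      rw [h1, sum_count_snd]
  have hsumout : ∀ x, ∑ u, (f' x u : ℤ) = (∑ u, (f x u : ℤ))
      + (((forwardArcs p d).countP (fun a => decide (a.1 = x)) : ℕ) : ℤ)
      - (((backwardArcs p d).countP (fun a => decide (a.1 = x)) : ℕ) : ℤ) := by
    intro x
    rw [Finset.sum_congr rfl (fun u _ => hcast x u), Finset.sum_add_distrib, hchi_out]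
    ring
  have hsumin : ∀ x, ∑ u, (f' u x : ℤ) = (∑ u, (f u x : ℤ))
      + (((forwardArcs p d).countP (fun a => decide (a.2 = x)) : ℕ) : ℤ)
      - (((backwardArcs p d).countP (fun a => decide (a.2 = x)) : ℕ) : ℤ) := by
    intro x
    rw [Finset.sum_congr rfl (fun u _ => hcast u x), Finset.sum_add_distrib, hchi_in]
    ring
  have e_out : ∀ x, (forwardArcs p d).countP (fun a => decide (a.1 = x))
      + (backwardArcs p d).countP (fun a => decide (a.2 = x)) = p.dropLast.count x := by
    intro x
    rw [forwardArcs_eq, backwardArcs_eq, fb_out x d (pathArcs p) harcs_len,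
      countP_fst_pathArcs]
  have e_in : ∀ x, (forwardArcs p d).countP (fun a => decide (a.2 = x))
      + (backwardArcs p d).countP (fun a => decide (a.1 = x)) = p.tail.count x := by
    intro x
    rw [forwardArcs_eq, backwardArcs_eq, fb_in x d (pathArcs p) harcs_len,
      countP_snd_pathArcs]
  have hdl1 : ∀ x, p.dropLast.count x ≤ 1 :=
    fun x => List.nodup_iff_count_le_one.mp (hn.sublist (List.dropLast_sublist p)) x
  have bridge : ∀ g : V → V → ℕ, ∀ x,
      ((∑ u, g x u : ℕ) : ℤ) = ∑ u, ((g x u : ℕ) : ℤ) := by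
    intro g x
    push_cast
    rfl
  have bridge' : ∀ g : V → V → ℕ, ∀ x,
      ((∑ u, g u x : ℕ) : ℤ) = ∑ u, ((g u x : ℕ) : ℤ) := by
    intro g x
    push_cast
    rfl
  refine ⟨f', ⟨?_, ?_⟩, ?_, ?_⟩
  · intro u v
    have h1 := hFc u v
    have h2 := hcast u v
    have h3 : (f' u v : ℤ) ≤ (N.c u v : ℤ) := by omega
    exact_mod_cast h3
  · intro x hxy hxz
    have o1 := hsumout x
    have o2 := hsumin x
    have eo := e_out x
    have ei := e_in x
    have t1 := count_eq_tail_count hh x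
    have t2 := count_eq_dropLast_count hl x
    rw [if_neg hxy] at t1
    rw [if_neg hxz] at t2
    have hc := hf.2 x hxy hxz
    have b1 := bridge f' x
    have b2 := bridge' f' x
    have b3 := bridge f x
    have b4 := bridge' f x
    rw [← b1, ← b3] at o1
    rw [← b2, ← b4] at o2
    have goal' : ((∑ u, f' u x : ℕ) : ℤ) = ((∑ u, f' x u : ℕ) : ℤ) := by omega
    exact_mod_cast goal'
  · -- value increases by one
    have o1 := hsumout y
    have o2 := hsumin y
    have eo := e_out y
    have ei := e_in y
    have t1 := count_eq_tail_count hh y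
    have t2 := count_eq_dropLast_count hl y
    rw [if_pos rfl] at t1
    rw [if_neg hyz] at t2
    unfold flowValue
    omega
  · intro x
    have o1 := hsumout x
    have eo := e_out x
    have h1 := hdl1 x
    omega

end NetFlow
namespace NetFlow

variable {V : Type*} [Fintype V] [DecidableEq V]

set_option linter.unusedSectionVars false

/-! ### Assembly -/

lemma decomposition_pathSeq {N : Network V} {y z : V} {f : V → V → ℕ}
    {γ w : List (List V)} (hf : IsFlow N y z f) (hd : IsDecomposition N y z f γ w) :
    IsPathSeq N y z γ := by
  refine ⟨hd.1, fun u v => ?_⟩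
  show seqFlow γ u v ≤ N.c u v
  rw [seqFlow_eq_sum_chi (fun p hp => (hd.1 p hp).2.1) u v]
  have h1 := hd.2.2.2 u v
  have h2 := hf.1 u v
  omega

lemma maxSeqLen_eq_maxFlowValue (N : Network V) (y z : V) (hyz : y ≠ z) :
    maxSeqLen N y z = maxFlowValue N y z := by
  refine le_antisymm (maxSeqLen_le_maxFlowValue N y z hyz) ?_
  obtain ⟨f, hf, hfv⟩ := exists_isMaxFlow N y z
  obtain ⟨γ, w, hd⟩ := exists_decomposition hyz _ f rfl hf (by rw [hfv]; positivity)
  have hps : IsPathSeq N y z γ := decomposition_pathSeq hf ⟨hd.1, hd.2.1, hd.2.2.1, hd.2.2.2⟩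
  have hlen : (γ.length : ℤ) = (maxFlowValue N y z : ℤ) := by
    rw [hd.2.2.1, hfv]
  have hlen' : γ.length = maxFlowValue N y z := by exact_mod_cast hlen
  rw [← hlen']
  exact le_maxSeqLen hyz hps

lemma removeVerts_c_le (N : Network V) (X : Finset V) (u v : V) :
    (removeVerts N X).c u v ≤ N.c u v := by
  unfold removeVerts
  dsimp only
  split
  · exact Nat.zero_le _
  · exact le_refl _

lemma isFlow_of_removeVerts {N : Network V} {X : Finset V} {y z : V} {f : V → V → ℕ}
    (hf : IsFlow (removeVerts N X) y z f) : IsFlow N y z f :=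
  ⟨fun u v => le_trans (hf.1 u v) (removeVerts_c_le N X u v), hf.2⟩

lemma maxFlowValue_removeVerts_le (N : Network V) (X : Finset V) (y z : V) :
    maxFlowValue (removeVerts N X) y z ≤ maxFlowValue N y z := by
  obtain ⟨g, hg, hgv⟩ := exists_isMaxFlow (removeVerts N X) y z
  exact le_maxFlowValue (isFlow_of_removeVerts hg) hgv

lemma chain'_imp_mem {R S : V → V → Prop} :
    ∀ {p : List V}, p.Chain' R → (∀ a ∈ p, ∀ b ∈ p, R a b → S a b) → p.Chain' S := by
  intro p
  induction p with
  | nil => intro _ _; exact List.isChain_nil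
  | cons a t ih =>
    intro hc hmem
    cases t with
    | nil => exact List.isChain_singleton a
    | cons b t' =>
      change List.IsChain _ _ at hc ⊢
      rw [List.isChain_cons_cons] at hc ⊢
      refine ⟨hmem a (by simp) b (by simp) hc.1, ?_⟩
      exact ih hc.2 fun c hc' e he' hce =>
        hmem c (List.mem_cons_of_mem _ hc') e (List.mem_cons_of_mem _ he') hce

/-- Lower bound: every maximum sequence passes through `x` at least `φ - φ_x` times. -/
lemma lX_lower {N : Network V} {y z x : V} (hyz : y ≠ z) {γ : List (List V)}
    (hγ : γ ∈ MaxSeqs N y z) :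
    (maxFlowValue N y z : ℤ) - (maxFlowValue (removeVerts N {x}) y z : ℤ)
      ≤ (lX {x} γ : ℤ) := by
  classical
  obtain ⟨hps, hlen⟩ := hγ
  set P : List V → Bool := fun p => p.any fun v => decide (v ∈ ({x} : Finset V)) with hP
  set γ' := γ.filter (fun p => ! P p) with hγ'
  have hlen' : γ'.length + lX {x} γ = γ.length := by
    rw [hγ', ← List.countP_eq_length_filter]
    have h1 := List.length_eq_countP_add_countP (p := P) (l := γ)
    have h2 : lX {x} γ = γ.countP P := rfl
    have h3 : γ.countP (fun a => decide ¬(P a = true)) = γ.countP (fun p => ! P p) := by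
      apply List.countP_congr
      intro a _
      cases hpa : P a <;> simp [hpa]
    omega
  have hmem' : ∀ p ∈ γ', p ∈ γ ∧ ∀ v ∈ p, v ≠ x := by
    intro p hp
    rw [hγ', List.mem_filter] at hp
    refine ⟨hp.1, fun v hv => ?_⟩
    intro hvx
    have h1 : P p = true := by
      rw [hP]
      rw [List.any_eq_true]
      exact ⟨v, hv, by simp [hvx]⟩
    rw [h1] at hp
    simp at hp
  have hps' : IsPathSeq (removeVerts N {x}) y z γ' := by
    constructor
    · intro p hp
      obtain ⟨hpγ, hpx⟩ := hmem' p hp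
      obtain ⟨h1, h2, h3, h4, h5⟩ := hps.1 p hpγ
      refine ⟨h1, h2, h3, h4, ?_⟩
      apply chain'_imp_mem h5
      intro a ha b hb hab
      unfold removeVerts
      dsimp only
      rw [if_neg]
      · exact hab
      · rintro (hc | hc) <;> simp only [Finset.mem_singleton] at hc
        · exact hpx a ha hc
        · exact hpx b hb hc
    · intro u v
      by_cases hx : u ∈ ({x} : Finset V) ∨ v ∈ ({x} : Finset V)
      · have h0 : (removeVerts N {x}).c u v = 0 := by
          unfold removeVerts
          dsimp only
          rw [if_pos hx]
        rw [h0]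
        rw [Nat.le_zero, List.countP_eq_zero]
        intro p hp
        obtain ⟨-, hpx⟩ := hmem' p hp
        simp only [decide_eq_true_eq]
        intro harc
        obtain ⟨hu, hv⟩ := mem_of_mem_pathArcs harc
        rcases hx with hc | hc <;> simp only [Finset.mem_singleton] at hc
        · exact hpx u hu hc
        · exact hpx v hv hc
      · have h0 : (removeVerts N {x}).c u v = N.c u v := by
          unfold removeVerts
          dsimp only
          rw [if_neg hx]
        rw [h0]
        exact le_trans ((List.filter_sublist (l := γ)).countP_le) (hps.2 u v)
  have h1 : γ'.length ≤ maxFlowValue (removeVerts N {x}) y z := by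
    rw [← maxSeqLen_eq_maxFlowValue _ _ _ hyz]
    exact le_maxSeqLen hyz hps'
  have h2 : γ.length = maxFlowValue N y z := by
    rw [hlen, maxSeqLen_eq_maxFlowValue _ _ _ hyz]
  omega

lemma countP_le_map_sum {α : Type*} (l : List α) (P : α → Bool) (g : α → ℕ)
    (h : ∀ a ∈ l, P a → 1 ≤ g a) : l.countP P ≤ (l.map g).sum := by
  induction l with
  | nil => simp
  | cons a t ih =>
    rw [List.countP_cons, List.map_cons, List.sum_cons]
    have h1 := ih fun b hb => h b (List.mem_cons_of_mem _ hb)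
    by_cases hp : P a
    · have h2 := h a (List.mem_cons_self) hp
      rw [if_pos hp]
      omega
    · rw [if_neg hp]
      omega

end NetFlow
namespace NetFlow

variable {V : Type*} [Fintype V] [DecidableEq V]

set_option linter.unusedSectionVars false

/-! ### Upper bound construction and main theorem -/

lemma removeVerts_y_zero (N : Network V) (y z : V) :
    maxFlowValue (removeVerts N {y}) y z = 0 := by
  refine Nat.le_zero.mp (csSup_le ⟨0, flowSet_nonempty _ y z⟩ ?_)
  rintro m ⟨f, hf, hv⟩
  have h1 : ∀ u, f y u = 0 := by
    intro u
    have h2 := hf.1 y u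
    have h3 : (removeVerts N {y}).c y u = 0 := by
      unfold removeVerts
      dsimp only
      rw [if_pos (Or.inl (Finset.mem_singleton_self y))]
    omega
  have h4 : ∑ u, ((f y u : ℕ) : ℤ) = 0 := by simp [h1]
  unfold flowValue at hv
  rw [h4] at hv
  have h5 : (0:ℤ) ≤ ∑ u, ((f u y : ℕ) : ℤ) := Finset.sum_nonneg fun u _ => by positivity
  omega

lemma removeVerts_z_zero (N : Network V) {y z : V} (hyz : y ≠ z) :
    maxFlowValue (removeVerts N {z}) y z = 0 := by
  refine Nat.le_zero.mp (csSup_le ⟨0, flowSet_nonempty _ y z⟩ ?_)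
  rintro m ⟨f, hf, hv⟩
  have h1 : ∀ u, f u z = 0 := by
    intro u
    have h2 := hf.1 u z
    have h3 : (removeVerts N {z}).c u z = 0 := by
      unfold removeVerts
      dsimp only
      rw [if_pos (Or.inr (Finset.mem_singleton_self z))]
    omega
  have h1' : ∀ u, f z u = 0 := by
    intro u
    have h2 := hf.1 z u
    have h3 : (removeVerts N {z}).c z u = 0 := by
      unfold removeVerts
      dsimp only
      rw [if_pos (Or.inl (Finset.mem_singleton_self z))]
    omega
  have hcut := flowValue_cut hf ({z} : Finset V)ᶜ
    (Finset.mem_compl.mpr (by simp [hyz])) (by simp)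
  rw [compl_compl] at hcut
  have h6 : ∀ u ∈ ({z} : Finset V)ᶜ, ∑ v ∈ ({z} : Finset V), ((f u v : ℤ) - f v u) = 0 := by
    intro u _
    rw [Finset.sum_singleton, h1 u, h1' u]
    simp
  rw [Finset.sum_congr rfl h6, Finset.sum_const, smul_zero] at hcut
  rw [hcut] at hv
  omega

lemma exists_maxseq_low (N : Network V) {y z : V} (x : V) (hyz : y ≠ z) :
    ∃ γ ∈ MaxSeqs N y z, (lX {x} γ : ℤ)
      ≤ (maxFlowValue N y z : ℤ) - (maxFlowValue (removeVerts N {x}) y z : ℤ) := by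
  classical
  rcases eq_or_ne x y with heq | hxy
  · subst heq
    obtain ⟨γ, hγ⟩ := exists_maxSeq N x z hyz
    refine ⟨γ, hγ, ?_⟩
    rw [removeVerts_y_zero N x z]
    have h1 : lX {x} γ ≤ γ.length := List.countP_le_length
    have h2 : γ.length = maxFlowValue N x z := by
      rw [hγ.2, maxSeqLen_eq_maxFlowValue _ _ _ hyz]
    push_cast
    omega
  rcases eq_or_ne x z with heq | hxz
  · subst heq
    obtain ⟨γ, hγ⟩ := exists_maxSeq N y x hyz
    refine ⟨γ, hγ, ?_⟩
    rw [removeVerts_z_zero N hyz]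
    have h1 : lX {x} γ ≤ γ.length := List.countP_le_length
    have h2 : γ.length = maxFlowValue N y x := by
      rw [hγ.2, maxSeqLen_eq_maxFlowValue _ _ _ hyz]
    push_cast
    omega
  -- main case
  set φ := maxFlowValue N y z with hφ
  set φx := maxFlowValue (removeVerts N {x}) y z with hφx
  have hle : φx ≤ φ := maxFlowValue_removeVerts_le N {x} y z
  obtain ⟨g, hg, hgv⟩ := exists_isMaxFlow (removeVerts N {x}) y z
  have hgN : IsFlow N y z g := isFlow_of_removeVerts hg
  have hg0 : ∀ u, g x u = 0 := by
    intro u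
    have h2 := hg.1 x u
    have h3 : (removeVerts N {x}).c x u = 0 := by
      unfold removeVerts
      dsimp only
      rw [if_pos (Or.inl (Finset.mem_singleton_self x))]
    omega
  have key : ∀ j : ℕ, ∃ f, IsFlow N y z f ∧ flowValue f y = ((min (φx + j) φ : ℕ) : ℤ)
      ∧ (∑ u, (f x u : ℤ)) ≤ ((min (φx + j) φ : ℕ) : ℤ) - (φx : ℤ) := by
    intro j
    induction j with
    | zero =>
      have e0 : min (φx + 0) φ = φx := by omega
      refine ⟨g, hgN, ?_, ?_⟩
      · rw [e0, hgv]
      · have h4 : ∑ u, ((g x u : ℕ) : ℤ) = 0 := by simp [hg0]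
        rw [e0, h4]
        omega
    | succ j ih =>
      obtain ⟨f, hf, hfv, hfx⟩ := ih
      by_cases hend : φ ≤ φx + j
      · have e : min (φx + (j+1)) φ = min (φx + j) φ := by omega
        rw [e]
        exact ⟨f, hf, hfv, hfx⟩
      · have e1 : min (φx + j) φ = φx + j := by omega
        have e2 : min (φx + (j+1)) φ = φx + j + 1 := by omega
        have hlt : flowValue f y < (φ : ℤ) := by
          rw [hfv, e1]
          exact_mod_cast (by omega : φx + j < φ)
        obtain ⟨p, dd, hpd⟩ := exists_augPath hyz hf hlt
        obtain ⟨f', hf', hv', hx'⟩ := augment hyz hf hpd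
        refine ⟨f', hf', ?_, ?_⟩
        · rw [hv', hfv, e1, e2]
          push_cast
          ring
        · have h2 := hx' x
          rw [e1] at hfx
          rw [e2]
          push_cast
          push_cast at hfx
          omega
  obtain ⟨f, hf, hfv, hfx⟩ := key φ
  have hminφ : min (φx + φ) φ = φ := by omega
  rw [hminφ] at hfv hfx
  obtain ⟨γ, w, hd⟩ := exists_decomposition hyz _ f rfl hf (by rw [hfv]; positivity)
  have hps : IsPathSeq N y z γ := decomposition_pathSeq hf hd
  have hγlen : γ.length = φ := by
    have := hd.2.2.1.trans hfv
    exact_mod_cast this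
  have hmem : γ ∈ MaxSeqs N y z := ⟨hps, by rw [hγlen, hφ, maxSeqLen_eq_maxFlowValue _ _ _ hyz]⟩
  refine ⟨γ, hmem, ?_⟩
  have hcount : lX {x} γ ≤ ∑ u, f x u := by
    have h1 : lX {x} γ ≤ (γ.map (fun p => ∑ u, chi p x u)).sum := by
      apply countP_le_map_sum
      intro p hp hP
      have hxp : x ∈ p := by
        rw [List.any_eq_true] at hP
        obtain ⟨v, hv, hvx⟩ := hP
        simp only [Finset.mem_singleton, decide_eq_true_eq] at hvx
        rwa [hvx] at hv
      obtain ⟨-, -, -, hlast, -⟩ := hd.1 p hp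
      have hc := count_eq_dropLast_count hlast x
      rw [if_neg hxz] at hc
      have hpos : 0 < p.count x := List.count_pos_iff.mpr hxp
      rw [sum_chi_out]
      omega
    have h2 : (γ.map (fun p => ∑ u, chi p x u)).sum = ∑ u, (γ.map (fun p => chi p x u)).sum :=
      (sum_univ_listsum γ (fun u p => chi p x u)).symm
    have h3 : ∑ u, (γ.map (fun p => chi p x u)).sum ≤ ∑ u, f x u := by
      apply Finset.sum_le_sum
      intro u _
      have h4 := hd.2.2.2 x u
      omega
    omega
  have hb : ((∑ u, f x u : ℕ) : ℤ) = ∑ u, ((f x u : ℕ) : ℤ) := by push_cast; rfl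
  rw [← hb] at hfx
  omega

lemma lambda_eq_phiDrop_singleton' (N : Network V) (y z x : V) (hyz : y ≠ z) :
    (lambdaX N y z {x} : ℤ) = phiDrop N y z {x} := by
  classical
  have hne : {n : ℕ | ∃ γ ∈ MaxSeqs N y z, lX {x} γ = n}.Nonempty := by
    obtain ⟨γ, hγ⟩ := exists_maxSeq N y z hyz
    exact ⟨lX {x} γ, γ, hγ, rfl⟩
  have hmem := Nat.sInf_mem hne
  obtain ⟨γL, hγL, hL⟩ := hmem
  have hlow := lX_lower (x := x) hyz hγL
  obtain ⟨γU, hγU, hUb⟩ := exists_maxseq_low N x hyz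
  have hup : lambdaX N y z {x} ≤ lX {x} γU := Nat.sInf_le ⟨γU, hγU, rfl⟩
  have hL' : lX {x} γL = lambdaX N y z {x} := hL
  have hup' : (lambdaX N y z {x} : ℤ) ≤ (lX {x} γU : ℤ) := by exact_mod_cast hup
  have hcast : (lX {x} γL : ℤ) = (lambdaX N y z {x} : ℤ) := by exact_mod_cast hL'
  unfold phiDrop
  omega

end NetFlow

/-- `λ^N_{yz}(x) = φ^N_{yz}(x)` for every vertex `x`. -/
theorem lambda_eq_phiDrop_singleton {V : Type*} [Fintype V] [DecidableEq V]
    (hV : 2 ≤ Fintype.card V) (N : Network V) (y z x : V) (hyz : y ≠ z) :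
    (NetFlow.lambdaX N y z {x} : ℤ) = NetFlow.phiDrop N y z {x} :=
  NetFlow.lambda_eq_phiDrop_singleton' N y z x hyz
end

section
/- There exist a network N = (V, A, c), a subset X ⊆ V with |X| = 2, and distinct vertices y, z ∈ V such that λ^N_{yz}(X) > φ^N_{yz}(X). (Concretely, one may take V = {y, u₁, u₂, v₁, v₂, x₁, x₂, z}, X = {x₁, x₂}, and capacity 1 on exactly the arcs (y,u₁), (y,u₂), (y,v₂), (u₁,v₁), (u₂,v₂), (u₂,x₂), (u₁,x₁), (x₂,v₁), (v₁,z), (v₂,z), (x₁,z), and capacity 0 elsewhere; then φ^N_{yz}(X) = 1 while λ^N_{yz}(X) = 2.) -/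
open NetFlow


def capArcs : List (Fin 8 × Fin 8) :=
  [(0,1),(0,2),(0,4),(1,3),(1,5),(2,4),(2,6),(3,7),(4,7),(5,7),(6,3)]

def N0 : Network (Fin 8) where
  c u v := if (u, v) ∈ capArcs then 1 else 0
  no_loop v := by fin_cases v <;> decide

def X0 : Finset (Fin 8) := {5, 6}

def P0 : Fin 8 → List (List (Fin 8)) :=
  ![[[0,1,3,7],[0,1,5,7],[0,2,4,7],[0,2,6,3,7],[0,4,7]],
    [[1,3,7],[1,5,7]],
    [[2,4,7],[2,6,3,7]],
    [[3,7]],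
    [[4,7]],
    [[5,7]],
    [[6,3,7]],
    [[7]]]

lemma step0 : ∀ v w : Fin 8, 1 ≤ N0.c v w → ∀ t ∈ P0 w, (v :: t) ∈ P0 v := by decide

lemma mem_P0 : ∀ (p : List (Fin 8)), p.Chain' (fun u v => 1 ≤ N0.c u v) →
    p.getLast? = some 7 → ∀ v, p.head? = some v → p ∈ P0 v := by
  intro p
  induction p with
  | nil => simp
  | cons a t ih =>
    intro hch hlast v hv
    simp at hv
    subst hv
    cases t with
    | nil =>
      simp [List.getLast?] at hlast
      subst hlast
      decide
    | cons b t' =>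
      rw [List.Chain', List.isChain_cons_cons] at hch
      rw [List.getLast?_cons_cons] at hlast
      have ht : (b :: t') ∈ P0 b := ih hch.2 hlast b rfl
      exact step0 a b hch.1 _ ht

lemma isPath_mem_P0 {p : List (Fin 8)} (h : IsPath N0 0 7 p) : p ∈ P0 0 := by
  obtain ⟨-, -, h1, h2, h3⟩ := h
  exact mem_P0 p h3 h2 0 h1



lemma length_le_countP3 {α : Type*} (l : List α) (q1 q2 q3 : α → Bool)
    (h : ∀ x ∈ l, q1 x ∨ q2 x ∨ q3 x) :
    l.length ≤ l.countP q1 + l.countP q2 + l.countP q3 := by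
  induction l with
  | nil => simp
  | cons a t ih =>
    have ha := h a (List.mem_cons_self (a := a) (l := t))
    have ht := ih fun x hx => h x (List.mem_cons_of_mem a hx)
    simp only [List.countP_cons, List.length_cons]
    rcases ha with ha | ha | ha <;> simp [ha] <;> omega

lemma first_arc : ∀ p ∈ P0 0,
    (decide ((((0:Fin 8), (1:Fin 8))) ∈ pathArcs p) : Bool) ∨
    (decide ((((0:Fin 8), (2:Fin 8))) ∈ pathArcs p) : Bool) ∨
    (decide ((((0:Fin 8), (4:Fin 8))) ∈ pathArcs p) : Bool) := by decide

def γ0 : List (List (Fin 8)) := [[0,1,5,7],[0,2,6,3,7],[0,4,7]]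

lemma γ0_seq : IsPathSeq N0 0 7 γ0 := by
  refine ⟨?_, by decide⟩
  intro p hp
  fin_cases hp <;>
    exact ⟨by decide, by decide, by decide, by decide,
      by simp only [List.Chain', List.isChain_cons_cons, List.isChain_singleton, and_true]; decide⟩

lemma seqLen_le (γ : List (List (Fin 8))) (h : IsPathSeq N0 0 7 γ) : γ.length ≤ 3 := by
  obtain ⟨hpaths, hcap⟩ := h
  have hmem : ∀ p ∈ γ, p ∈ P0 0 := fun p hp => isPath_mem_P0 (hpaths p hp)
  have := length_le_countP3 γ
    (fun p => decide (((0:Fin 8), (1:Fin 8)) ∈ pathArcs p))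
    (fun p => decide (((0:Fin 8), (2:Fin 8)) ∈ pathArcs p))
    (fun p => decide (((0:Fin 8), (4:Fin 8)) ∈ pathArcs p))
    (fun p hp => first_arc p (hmem p hp))
  have h1 := hcap 0 1
  have h2 := hcap 0 2
  have h4 := hcap 0 4
  have c1 : N0.c 0 1 = 1 := by decide
  have c2 : N0.c 0 2 = 1 := by decide
  have c4 : N0.c 0 4 = 1 := by decide
  omega

lemma maxSeqLen_eq : maxSeqLen N0 0 7 = 3 := by
  have hub : ∀ m ∈ {m : ℕ | ∃ γ : List (List (Fin 8)), IsPathSeq N0 0 7 γ ∧ γ.length = m},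
      m ≤ 3 := by
    rintro m ⟨γ, hγ, rfl⟩
    exact seqLen_le γ hγ
  have hmem : 3 ∈ {m : ℕ | ∃ γ : List (List (Fin 8)), IsPathSeq N0 0 7 γ ∧ γ.length = m} :=
    ⟨γ0, γ0_seq, rfl⟩
  exact le_antisymm (csSup_le ⟨3, hmem⟩ hub) (le_csSup ⟨3, hub⟩ hmem)



lemma three_paths : ∀ p1 ∈ P0 0, ∀ p2 ∈ P0 0, ∀ p3 ∈ P0 0,
    (∀ u v : Fin 8,
      List.countP (fun p => decide ((u, v) ∈ pathArcs p)) [p1, p2, p3] ≤ N0.c u v) →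
    2 ≤ lX X0 [p1, p2, p3] := by decide



lemma lambdaX_ge : 2 ≤ lambdaX N0 0 7 X0 := by
  have hne : {n : ℕ | ∃ γ ∈ MaxSeqs N0 0 7, lX X0 γ = n}.Nonempty := by
    refine ⟨lX X0 γ0, γ0, ⟨γ0_seq, ?_⟩, rfl⟩
    rw [maxSeqLen_eq]; rfl
  have hmem := Nat.sInf_mem hne
  obtain ⟨γ, ⟨hseq, hlen⟩, hlx⟩ := hmem
  rw [maxSeqLen_eq] at hlen
  obtain ⟨p1, p2, p3, rfl⟩ := List.length_eq_three.mp hlen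
  have h1 : p1 ∈ P0 0 := isPath_mem_P0 (hseq.1 p1 (by simp))
  have h2 : p2 ∈ P0 0 := isPath_mem_P0 (hseq.1 p2 (by simp))
  have h3 : p3 ∈ P0 0 := isPath_mem_P0 (hseq.1 p3 (by simp))
  have := three_paths p1 h1 p2 h2 p3 h3 hseq.2
  rw [hlx] at this
  exact this

-- flow-value bounds

lemma flowValue_le_out {N : Network (Fin 8)} {y z : Fin 8} {f : Fin 8 → Fin 8 → ℕ}
    (hf : IsFlow N y z f) : flowValue f y ≤ ∑ u, (N.c y u : ℤ) := by
  unfold flowValue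
  have h1 : ∑ u, (f y u : ℤ) ≤ ∑ u, (N.c y u : ℤ) :=
    Finset.sum_le_sum fun u _ => by exact_mod_cast hf.1 y u
  have h2 : (0 : ℤ) ≤ ∑ u, (f u y : ℤ) :=
    Finset.sum_nonneg fun u _ => by positivity
  omega

lemma flowValue_eq_target {N : Network (Fin 8)} {y z : Fin 8} {f : Fin 8 → Fin 8 → ℕ}
    (hyz : y ≠ z) (hf : IsFlow N y z f) :
    flowValue f y = (∑ u, (f u z : ℤ)) - ∑ u, (f z u : ℤ) := by
  set g : Fin 8 → ℤ := fun x => (∑ u, (f x u : ℤ)) - ∑ u, (f u x : ℤ) with hg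
  have htot : ∑ x, g x = 0 := by
    simp only [hg, Finset.sum_sub_distrib]
    rw [Finset.sum_comm]
    ring
  have hzero : ∀ x ∈ Finset.univ, x ∉ ({y, z} : Finset (Fin 8)) → g x = 0 := by
    intro x _ hx
    simp only [Finset.mem_insert, Finset.mem_singleton, not_or] at hx
    have := hf.2 x hx.1 hx.2
    simp only [hg]
    have : (∑ u, (f u x : ℤ)) = ∑ u, (f x u : ℤ) := by exact_mod_cast this
    omega
  have hpair : ∑ x ∈ ({y, z} : Finset (Fin 8)), g x = ∑ x, g x :=
    Finset.sum_subset (Finset.subset_univ _) hzero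
  rw [htot, Finset.sum_pair hyz] at hpair
  have hgy : g y = flowValue f y := rfl
  have hgz : g z = (∑ u, (f z u : ℤ)) - ∑ u, (f u z : ℤ) := rfl
  omega



def f0 : Fin 8 → Fin 8 → ℕ := fun u v =>
  if (u, v) ∈ [((0:Fin 8),(1:Fin 8)),(1,5),(5,7),(0,2),(2,6),(6,3),(3,7),(0,4),(4,7)] then 1 else 0

def f1 : Fin 8 → Fin 8 → ℕ := fun u v =>
  if (u, v) ∈ [((0:Fin 8),(1:Fin 8)),(1,3),(3,7),(0,4),(4,7)] then 1 else 0

lemma maxFlow_N0 : maxFlowValue N0 0 7 = 3 := by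
  have hub : ∀ m ∈ {m : ℕ | ∃ f, IsFlow N0 0 7 f ∧ flowValue f 0 = (m : ℤ)}, m ≤ 3 := by
    rintro m ⟨f, hf, hv⟩
    have h1 := flowValue_le_out hf
    have h2 : ∑ u, (N0.c 0 u : ℤ) = 3 := by decide
    rw [hv, h2] at h1
    exact_mod_cast h1
  have hmem : 3 ∈ {m : ℕ | ∃ f, IsFlow N0 0 7 f ∧ flowValue f 0 = ((3:ℕ) : ℤ)} := by
    refine ⟨f0, ⟨by decide, by decide⟩, by decide⟩
  exact le_antisymm (csSup_le ⟨3, hmem⟩ hub) (le_csSup ⟨3, hub⟩ hmem)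

lemma maxFlow_N0X : maxFlowValue (removeVerts N0 X0) 0 7 = 2 := by
  have hub : ∀ m ∈ {m : ℕ | ∃ f, IsFlow (removeVerts N0 X0) 0 7 f ∧ flowValue f 0 = (m : ℤ)},
      m ≤ 2 := by
    rintro m ⟨f, hf, hv⟩
    have h1 := flowValue_eq_target (by decide : (0 : Fin 8) ≠ 7) hf
    have h2 : ∑ u, (f u 7 : ℤ) ≤ ∑ u, ((removeVerts N0 X0).c u 7 : ℤ) :=
      Finset.sum_le_sum fun u _ => by exact_mod_cast hf.1 u 7
    have h3 : ∑ u, (((removeVerts N0 X0).c u 7 : ℤ)) = 2 := by decide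
    have h4 : (0 : ℤ) ≤ ∑ u, (f 7 u : ℤ) :=
      Finset.sum_nonneg fun u _ => by positivity
    rw [hv] at h1
    have : (m : ℤ) ≤ 2 := by omega
    exact_mod_cast this
  have hmem : 2 ∈ {m : ℕ | ∃ f, IsFlow (removeVerts N0 X0) 0 7 f ∧ flowValue f 0 = ((2:ℕ) : ℤ)} := by
    refine ⟨f1, ⟨by decide, by decide⟩, by decide⟩
  exact le_antisymm (csSup_le ⟨2, hmem⟩ hub) (le_csSup ⟨2, hub⟩ hmem)



/-- there is a network, a two-element set `X` of vertices and distinct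
vertices `y, z` with `λ^N_{yz}(X) > φ^N_{yz}(X)`. -/
theorem exists_lambda_gt_phiDrop :
    ∃ (N : Network (Fin 8)) (X : Finset (Fin 8)) (y z : Fin 8),
      y ≠ z ∧ X.card = 2 ∧ NetFlow.phiDrop N y z X < (NetFlow.lambdaX N y z X : ℤ) := by
  refine ⟨N0, X0, 0, 7, by decide, by decide, ?_⟩
  have h := lambdaX_ge
  unfold NetFlow.phiDrop
  rw [maxFlow_N0, maxFlow_N0X]
  have : (2 : ℤ) ≤ (NetFlow.lambdaX N0 0 7 X0 : ℤ) := by exact_mod_cast h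
  omega
end
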